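/- arXiv:2511.08333 — 11 statements merged into one kernel-verified Lean document; each statement's English description precedes it below -/
import Mathlib

section
/- Let M be an n×n matrix with entries in {1,-1} and all diagonal entries equal to 1. Then the characteristic polynomial det(xI - M) = Σ_{i=0}^{n} a_i x^{n-i} satisfies a_0 = 1, a_1 = -n, and 2^(k-1) divides a_k for each k in {1,...,n}. -/
open Polynomial Matrix

private lemma coeff_comp_twoX (p : ℤ[X]) (m : ℕ) :
    (p.comp (C 2 * X)).coeff m = 2 ^ m * p.coeff m := by
  rw [Polynomial.comp_eq_sum_left, Polynomial.coeff_sum, Polynomial.sum_def]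
  have : ∀ e ∈ p.support, (C (p.coeff e) * (C 2 * X) ^ e).coeff m
      = if e = m then 2 ^ m * p.coeff m else 0 := by
    intro e _
    rw [mul_pow, ← C_pow, ← mul_assoc, ← C_mul, coeff_C_mul, coeff_X_pow]
    split_ifs with h1 h2 h2
    · subst h2; ring
    · omega
    · omega
    · ring
  rw [Finset.sum_congr rfl this, Finset.sum_ite_eq' p.support m fun _ => 2 ^ m * p.coeff m]
  split_ifs with h
  · rfl
  · simp [not_not.mp (fun hc => h (Polynomial.mem_support_iff.mpr hc))]

private lemma key_dvd (n : ℕ) (hn : 1 ≤ n) (M : Matrix (Fin n) (Fin n) ℤ)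
    (hent : ∀ i j, M i j = 1 ∨ M i j = -1) :
    (2 : ℤ[X]) ^ (n - 1) ∣ (M.charpoly.comp (C 2 * X)) := by
  haveI : NeZero n := ⟨by omega⟩
  set A : Matrix (Fin n) (Fin n) ℤ[X] :=
    Matrix.of (fun i j => (if i = j then C 2 * X else 0) - C (M i j)) with hA
  have hcomp : M.charpoly.comp (C 2 * X) = A.det := by
    rw [Polynomial.comp_eq_aeval, Matrix.charpoly,
      AlgHom.map_det (Polynomial.aeval (C 2 * X : ℤ[X])) (charmatrix M)]
    congr 1
    ext i j
    by_cases h : i = j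
    · subst h
      simp [charmatrix_apply_eq, hA, Polynomial.aeval_X, Polynomial.aeval_C,
        Polynomial.algebraMap_eq]
    · simp [charmatrix_apply_ne _ _ _ h, hA, h, Polynomial.aeval_C, Polynomial.algebraMap_eq]
  rw [hcomp]
  set d : Fin n → Fin n → ℤ[X] := fun i j =>
    (if i = j then X else 0) - (if (0 : Fin n) = j then X else 0) - C ((M i j - M 0 j) / 2) with hd
  have hdvd2 : ∀ i j, M i j = M 0 j + 2 * ((M i j - M 0 j) / 2) := by
    intro i j
    rcases hent i j with h1 | h1 <;> rcases hent 0 j with h2 | h2 <;> rw [h1, h2] <;> decide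
  have hAd : ∀ i j, A i j - A 0 j = 2 * d i j := by
    intro i j
    have hc : (C (M i j) : ℤ[X]) = C (M 0 j) + 2 * C ((M i j - M 0 j) / 2) := by
      rw [show (2 : ℤ[X]) = C 2 from (map_ofNat C 2).symm, ← C_mul, ← C_add, ← hdvd2 i j]
    simp only [hA, hd, Matrix.of_apply, hc, map_ofNat]
    split_ifs <;> ring
  set B : Matrix (Fin n) (Fin n) ℤ[X] :=
    Matrix.of (fun i j => if i = 0 then A 0 j else 2 * d i j) with hB
  have hdet : A.det = B.det := by
    apply Matrix.det_eq_of_forall_row_eq_smul_add_const (fun i => if i = 0 then 0 else 1) 0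
      (by simp)
    intro i j
    by_cases h : i = 0
    · subst h; simp [hB]
    · have hB0 : B 0 j = A 0 j := by simp [hB]
      simp only [hB, Matrix.of_apply, if_neg h, one_mul, if_true]
      linear_combination hAd i j
  set Cm : Matrix (Fin n) (Fin n) ℤ[X] :=
    Matrix.of (fun i j => if i = 0 then A 0 j else d i j) with hCm
  have hBC : B = Matrix.of (fun i j => (if i = 0 then 1 else 2 : ℤ[X]) * Cm i j) := by
    ext i j
    by_cases h : i = 0 <;> simp [hB, hCm, h]
  have hdetB : B.det = (∏ i : Fin n, (if i = 0 then 1 else 2 : ℤ[X])) * Cm.det := by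
    rw [hBC]; exact Matrix.det_mul_column _ _
  have hprod : (∏ i : Fin n, (if i = 0 then 1 else 2 : ℤ[X])) = 2 ^ (n - 1) := by
    rw [← Finset.mul_prod_erase _ _ (Finset.mem_univ (0 : Fin n)), if_pos rfl, one_mul,
      Finset.prod_congr rfl (fun i hi => if_neg (Finset.mem_erase.mp hi).1),
      Finset.prod_const, Finset.card_erase_of_mem (Finset.mem_univ _), Finset.card_univ,
      Fintype.card_fin]
  rw [hdet, hdetB, hprod]
  exact Dvd.intro _ rfl
/-- For an `n×n` `{±1}`-matrix `M` with unit diagonal, writing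
`det(xI - M) = Σ a_i x^(n-i)`, one has `a_0 = 1`, `a_1 = -n`, and `2^(k-1) ∣ a_k`
for each `k ∈ {1,…,n}`. -/
theorem stmt3 (n : ℕ) (M : Matrix (Fin n) (Fin n) ℤ)
    (hent : ∀ i j, M i j = 1 ∨ M i j = -1) (hdiag : ∀ i, M i i = 1) :
    M.charpoly.coeff n = 1 ∧
    (1 ≤ n → M.charpoly.coeff (n - 1) = -(n : ℤ)) ∧
    (∀ k, 1 ≤ k → k ≤ n → (2 : ℤ) ^ (k - 1) ∣ M.charpoly.coeff (n - k)) := by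
  refine ⟨?_, ?_, ?_⟩
  · have h := (Matrix.charpoly_monic M).coeff_natDegree
    rwa [Matrix.charpoly_natDegree_eq_dim, Fintype.card_fin] at h
  · intro hn
    haveI : NeZero n := ⟨by omega⟩
    have h := Matrix.trace_eq_neg_charpoly_coeff M
    rw [Fintype.card_fin] at h
    have ht : M.trace = (n : ℤ) := by
      rw [Matrix.trace]
      simp [Matrix.diag, hdiag]
    rw [ht] at h
    linarith
  · intro k hk hkn
    obtain ⟨r, hr⟩ := key_dvd n (le_trans hk hkn) M hent
    have hco := congrArg (fun p => Polynomial.coeff p (n - k)) hr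
    simp only [coeff_comp_twoX] at hco
    have h2 : ((2 : ℤ[X]) ^ (n - 1) * r).coeff (n - k)
        = 2 ^ (n - 1) * r.coeff (n - k) := by
      rw [show ((2 : ℤ[X]) ^ (n - 1)) = Polynomial.C (2 ^ (n - 1)) from by
        rw [map_pow, map_ofNat], Polynomial.coeff_C_mul]
    rw [h2, show n - 1 = (n - k) + (k - 1) from by omega, pow_add, mul_assoc] at hco
    exact ⟨r.coeff (n - k), mul_left_cancel₀ (pow_ne_zero _ two_ne_zero) hco⟩
end

section
/- Let M be an n×n {±1}-matrix with diagonal entries 1 such that M - I is skew-symmetric. Then the coefficient of x^(n-2) in det(xI - M) equals n(n-1). -/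
open Matrix Polynomial Finset Equiv

lemma aux_choose (n : ℕ) : 2 * n.choose 2 = n * (n - 1) := by
  induction n with
  | zero => rfl
  | succ m ih =>
    rw [Nat.choose_succ_succ, Nat.mul_add, ih, Nat.choose_one_right, Nat.succ_sub_one]
    cases m with
    | zero => rfl
    | succ k => rw [Nat.succ_sub_one]; ring


/-- For an `n×n` `{±1}`-matrix `M` (with `n ≥ 2`) having unit diagonal
and `M - I` skew-symmetric, the coefficient of `x^(n-2)` in `det(xI - M)` is `n(n-1)`. -/
theorem stmt4 (n : ℕ) (hn : 2 ≤ n) (M : Matrix (Fin n) (Fin n) ℤ)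
    (hent : ∀ i j, M i j = 1 ∨ M i j = -1) (hdiag : ∀ i, M i i = 1)
    (hskew : (M - 1)ᵀ = -(M - 1)) :
    M.charpoly.coeff (n - 2) = (n : ℤ) * ((n : ℤ) - 1) := by
  -- off-diagonal products
  have hprod : ∀ i j : Fin n, i ≠ j → M i j * M j i = -1 := by
    intro i j hij
    have h := congrFun (congrFun hskew j) i
    simp only [transpose_apply, Matrix.sub_apply, Matrix.neg_apply, one_apply_ne hij,
      one_apply_ne hij.symm, sub_zero] at h
    rw [h]
    rcases hent j i with h1 | h1 <;> rw [h1] <;> ring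
  -- product over a permutation
  have key : ∀ σ : Equiv.Perm (Fin n),
      (∏ i : Fin n, charmatrix M (σ i) i) =
        (X - 1) ^ (n - σ.support.card) * C (∏ i ∈ σ.support, (-M (σ i) i)) := by
    intro σ
    rw [← Finset.prod_compl_mul_prod σ.support]
    congr 1
    · rw [Finset.prod_congr rfl (fun i hi => ?_), Finset.prod_const]
      · congr 1
        simp [Finset.card_compl]
      · simp only [Finset.mem_compl, Equiv.Perm.mem_support, not_not] at hi
        rw [hi, charmatrix_apply_eq, hdiag, Polynomial.C_1]
    · rw [map_prod]
      refine Finset.prod_congr rfl (fun i hi => ?_)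
      rw [charmatrix_apply_ne _ _ _ (Equiv.Perm.mem_support.mp hi), map_neg]
  have hc2 : ((X - 1 : ℤ[X]) ^ n).coeff (n - 2) = (n.choose 2 : ℤ) := by
    have h1 : (X - 1 : ℤ[X]) = X + C (-1) := by simp [sub_eq_add_neg]
    rw [h1, Polynomial.coeff_X_add_C_pow, Nat.sub_sub_self hn, Nat.choose_symm hn]
    norm_num
  -- expand determinant
  rw [Matrix.charpoly, Matrix.det_apply, Polynomial.finset_sum_coeff]
  -- the coefficient extracted termwise
  set g : Equiv.Perm (Fin n) → ℤ :=
    fun σ => (Equiv.Perm.sign σ • ∏ i : Fin n, charmatrix M (σ i) i).coeff (n - 2) with hg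
  have hbig : ∀ σ, g σ = Equiv.Perm.sign σ •
      ((∏ i ∈ σ.support, (-M (σ i) i)) * ((X - 1 : ℤ[X]) ^ (n - σ.support.card)).coeff (n - 2)) := by
    intro σ
    rw [hg]
    simp only [Polynomial.coeff_smul, key σ, mul_comm ((X - 1 : ℤ[X]) ^ _),
      Polynomial.coeff_C_mul]
  have hzero : ∀ σ ∈ (Finset.univ.erase (1 : Equiv.Perm (Fin n))),
      σ.support.card ≠ 2 → g σ = 0 := by
    intro σ hσ hcard
    have h2 : 2 ≤ σ.support.card :=
      Equiv.Perm.two_le_card_support_of_ne_one (Finset.ne_of_mem_erase hσ)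
    have hle : σ.support.card ≤ n := by
      simpa using Finset.card_le_univ σ.support
    have h3 : 3 ≤ σ.support.card := by omega
    rw [hbig]
    have hdeg : ((X - 1 : ℤ[X]) ^ (n - σ.support.card)).coeff (n - 2) = 0 := by
      apply Polynomial.coeff_eq_zero_of_natDegree_lt
      calc ((X - 1 : ℤ[X]) ^ (n - σ.support.card)).natDegree
          ≤ (n - σ.support.card) * (X - 1 : ℤ[X]).natDegree := Polynomial.natDegree_pow_le
        _ ≤ (n - σ.support.card) * 1 := by
            gcongr
            exact Polynomial.natDegree_X_sub_C_le 1
        _ < n - 2 := by omega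
    rw [hdeg, mul_zero, smul_zero]
  have hswap : ∀ σ ∈ (Finset.univ.erase (1 : Equiv.Perm (Fin n))).filter
      (fun σ => σ.support.card = 2), g σ = 1 := by
    intro σ hσ
    rw [Finset.mem_filter] at hσ
    obtain ⟨a, b, hab, rfl⟩ := Equiv.Perm.card_support_eq_two.mp hσ.2
    have hsupp := Equiv.Perm.support_swap hab
    rw [hbig]
    have hcd : ((X - 1 : ℤ[X]) ^ (n - (Equiv.swap a b).support.card)).coeff (n - 2) = 1 := by
      rw [hσ.2]
      have hm : ((X - 1 : ℤ[X]) ^ (n - 2)).natDegree = n - 2 := by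
        rw [Polynomial.natDegree_pow, ← Polynomial.C_1, Polynomial.natDegree_X_sub_C, mul_one]
      have h := (((Polynomial.monic_X_sub_C (1 : ℤ))).pow (n - 2)).coeff_natDegree
      rw [Polynomial.C_1] at h
      rwa [hm] at h
    rw [hcd, mul_one, hsupp]
    rw [Finset.prod_pair hab, Equiv.swap_apply_left, Equiv.swap_apply_right]
    have : -M b a * -M a b = -1 := by
      have := hprod a b (by exact fun h => hab h)
      nlinarith [this]
    rw [this, Equiv.Perm.sign_swap hab]
    simp
  -- split the sum
  have hsplit : ∑ σ : Equiv.Perm (Fin n), g σ =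
      g 1 + ∑ σ ∈ (Finset.univ.erase (1 : Equiv.Perm (Fin n))), g σ := by
    rw [← Finset.add_sum_erase _ g (Finset.mem_univ 1)]
  rw [hsplit, ← Finset.sum_filter_of_ne
    (fun σ hσ hne => by_contra fun h => hne (hzero σ hσ h))]
  rw [Finset.sum_congr rfl hswap, Finset.sum_const, nsmul_eq_mul, mul_one]
  -- count the swaps
  have hcount : ((Finset.univ.erase (1 : Equiv.Perm (Fin n))).filter
      (fun σ => σ.support.card = 2)).card = n.choose 2 := by
    have hdet : ∀ σ τ : Equiv.Perm (Fin n), σ.support.card = 2 → τ.support.card = 2 →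
        σ.support = τ.support → σ = τ := by
      intro σ τ hσ hτ hst
      obtain ⟨a, b, hab, rfl⟩ := Equiv.Perm.card_support_eq_two.mp hσ
      obtain ⟨c, d, hcd, rfl⟩ := Equiv.Perm.card_support_eq_two.mp hτ
      rw [Equiv.Perm.support_swap hab, Equiv.Perm.support_swap hcd] at hst
      have ha : a = c ∨ a = d := by
        have : a ∈ ({c, d} : Finset (Fin n)) := by rw [← hst]; simp
        simpa using this
      have hb : b = c ∨ b = d := by
        have : b ∈ ({c, d} : Finset (Fin n)) := by rw [← hst]; simp
        simpa using this
      rcases ha with rfl | rfl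
      · rcases hb with rfl | rfl
        · exact absurd rfl hab
        · rfl
      · rcases hb with rfl | rfl
        · exact Equiv.swap_comm a b
        · exact absurd rfl hab
    rw [← show (Finset.univ.powersetCard 2 : Finset (Finset (Fin n))).card = n.choose 2 by
      rw [Finset.card_powersetCard, Finset.card_univ, Fintype.card_fin]]
    apply Finset.card_bij (fun σ _ => σ.support)
    · intro σ hσ
      rw [Finset.mem_filter] at hσ
      exact Finset.mem_powersetCard.mpr ⟨Finset.subset_univ _, hσ.2⟩
    · intro σ hσ τ hτ h
      rw [Finset.mem_filter] at hσ hτ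
      exact hdet σ τ hσ.2 hτ.2 h
    · intro t ht
      rw [Finset.mem_powersetCard] at ht
      obtain ⟨a, b, hab, rfl⟩ := Finset.card_eq_two.mp ht.2
      refine ⟨Equiv.swap a b, Finset.mem_filter.mpr ⟨Finset.mem_erase.mpr
        ⟨fun h => hab (Equiv.swap_eq_one_iff.mp h), Finset.mem_univ _⟩,
        Equiv.Perm.card_support_swap hab⟩, Equiv.Perm.support_swap hab⟩
  -- value at identity
  have hone : g 1 = (n.choose 2 : ℤ) := by
    rw [hbig]
    simp only [Equiv.Perm.support_one, Finset.card_empty, Finset.prod_empty,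
      Nat.sub_zero, one_mul, Equiv.Perm.sign_one, one_smul, hc2]
  rw [hone, hcount]
  have h2 := aux_choose n
  have hcast : ((n * (n - 1) : ℕ) : ℤ) = (n : ℤ) * ((n : ℤ) - 1) := by
    push_cast [Nat.cast_sub (show 1 ≤ n by omega)]
    ring
  have : ((2 * n.choose 2 : ℕ) : ℤ) = (n : ℤ) * ((n : ℤ) - 1) := by rw [h2, hcast]
  push_cast at this
  linarith
end

section
/- Let M be an n×n {±1}-matrix with all diagonal entries 1 such that M - I is skew-symmetric, and write det(xI - M) = Σ_{i=0}^{n} a_i x^{n-i}. Then for every odd k in {1,...,n}, a_k = -Σ_{i=0}^{k-1} binom(n-i, n-k)·a_i. -/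
open Matrix Polynomial Finset

lemma aux_charpoly_comp {n : ℕ} (A : Matrix (Fin n) (Fin n) ℤ) (q : ℤ[X]) :
    A.charpoly.comp q = (Matrix.scalar (Fin n) q - A.map Polynomial.C).det := by
  have h : A.charpoly.comp q = eval₂RingHom C q A.charpoly := rfl
  rw [h, Matrix.charpoly, RingHom.map_det]
  congr 1
  refine Matrix.ext fun i j => ?_
  by_cases h : i = j
  · subst h
    rw [RingHom.mapMatrix_apply, Matrix.map_apply, charmatrix_apply_eq]
    simp [Matrix.scalar_apply]
    exact map_intCast (eval₂RingHom (C : ℤ →+* ℤ[X]) q) _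
  · rw [RingHom.mapMatrix_apply, Matrix.map_apply, charmatrix_apply_ne _ _ _ h]
    simp [Matrix.scalar_apply, Matrix.diagonal_apply_ne _ h]
    exact map_intCast (eval₂RingHom (C : ℤ →+* ℤ[X]) q) _

lemma aux_coeff_comp_neg_X (p : ℤ[X]) (j : ℕ) :
    (p.comp (-X)).coeff j = (-1) ^ j * p.coeff j := by
  induction p using Polynomial.induction_on' with
  | add f g hf hg => simp [add_comp, hf, hg, mul_add]
  | monomial k a =>
    rw [monomial_comp, neg_pow]
    rw [show ((-1:ℤ[X])^k) = C ((-1:ℤ)^k) by simp]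
    rw [← mul_assoc, ← C_mul, coeff_C_mul, coeff_X_pow, coeff_monomial]
    by_cases h : k = j
    · subst h; simp; ring
    · simp [h, Ne.symm h]

lemma aux_coeff_comp_X_add_one (p : ℤ[X]) (m : ℕ) :
    (p.comp (X + 1)).coeff m =
      ∑ j ∈ range (p.natDegree + 1), p.coeff j * (j.choose m : ℤ) := by
  conv_lhs => rw [p.as_sum_range]
  rw [Polynomial.sum_comp, finset_sum_coeff]
  refine Finset.sum_congr rfl fun j _ => ?_
  rw [monomial_comp, coeff_C_mul, coeff_X_add_one_pow]

/-- For an `n×n` `{±1}`-matrix `M` with unit diagonal and `M - I`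
skew-symmetric, writing `det(xI - M) = Σ a_i x^(n-i)`, for every odd `k ∈ {1,…,n}`:
`a_k = -Σ_{i=0}^{k-1} C(n-i, n-k) a_i`. -/
theorem stmt5 (n : ℕ) (M : Matrix (Fin n) (Fin n) ℤ)
    (hent : ∀ i j, M i j = 1 ∨ M i j = -1) (hdiag : ∀ i, M i i = 1)
    (hskew : (M - 1)ᵀ = -(M - 1)) :
    ∀ k, Odd k → 1 ≤ k → k ≤ n →
      M.charpoly.coeff (n - k) =
        -∑ i ∈ Finset.range k, ((n - i).choose (n - k) : ℤ) * M.charpoly.coeff (n - i) := by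
  intro k hodd hk1 hkn
  set p := M.charpoly with hp
  have hdeg : p.natDegree = n := by simp [hp]
  set N := M - 1 with hN
  have h1 : N.charpoly = p.comp (X + 1) := by
    rw [aux_charpoly_comp, Matrix.charpoly]
    congr 1
    refine Matrix.ext fun i j => ?_
    by_cases h : i = j
    · subst h
      rw [charmatrix_apply_eq]
      simp [hN, Matrix.scalar_apply, Matrix.sub_apply, Matrix.one_apply_eq]
      ring
    · rw [charmatrix_apply_ne _ _ _ h]
      simp [hN, Matrix.scalar_apply, Matrix.sub_apply, Matrix.one_apply_ne h,
        Matrix.diagonal_apply_ne _ h]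
  have hzero : N.charpoly.coeff (n - k) = 0 := by
    have hM : Matrix.scalar (Fin n) (-X) - N.map C = -((charmatrix N)ᵀ) := by
      refine Matrix.ext fun i j => ?_
      have hNji : N j i = -N i j := by
        have := congrFun (congrFun hskew i) j
        simpa [Matrix.transpose_apply] using this
      by_cases h : i = j
      · subst h
        have hNii : N i i = 0 := by simp [hN, hdiag i]
        simp [Matrix.scalar_apply, Matrix.transpose_apply, charmatrix_apply_eq, hNii]
      · simp [Matrix.scalar_apply, Matrix.transpose_apply,
          charmatrix_apply_ne _ _ _ (Ne.symm h), Matrix.diagonal_apply_ne _ h, hNji]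
    have hc : N.charpoly.comp (-X) = C ((-1:ℤ)^n) * N.charpoly := by
      rw [aux_charpoly_comp, hM]
      rw [show (-((charmatrix N)ᵀ)) = (-1 : ℤ[X]) • ((charmatrix N)ᵀ) by simp]
      rw [Matrix.det_smul, Matrix.det_transpose]
      simp [Matrix.charpoly]
    have h3 := aux_coeff_comp_neg_X N.charpoly (n - k)
    rw [hc, coeff_C_mul] at h3
    have hsign : ((-1:ℤ))^n = -(-1:ℤ)^(n-k) := by
      conv_lhs => rw [← Nat.sub_add_cancel hkn]
      rw [pow_add, Odd.neg_one_pow hodd, mul_neg_one]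
    rw [hsign] at h3
    rcases Nat.even_or_odd (n - k) with he | ho
    · rw [he.neg_one_pow] at h3; linarith
    · rw [ho.neg_one_pow] at h3; linarith
  have h4 : ∑ j ∈ Finset.range (n+1), p.coeff j * ((j.choose (n-k)) : ℤ) = 0 := by
    have h := aux_coeff_comp_X_add_one p (n-k)
    rw [hdeg] at h
    rw [← h, ← h1]
    exact hzero
  have h5 : ∑ i ∈ Finset.range (n+1), p.coeff (n - i) * (((n-i).choose (n-k)) : ℤ) = 0 := by
    have h := Finset.sum_range_reflect (fun j => p.coeff j * ((j.choose (n-k)):ℤ)) (n+1)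
    have h' := h.trans h4
    simpa using h'
  have h6 : ∑ i ∈ Finset.range (k+1), p.coeff (n - i) * (((n-i).choose (n-k)) : ℤ) = 0 := by
    rw [← h5]
    refine Finset.sum_subset (Finset.range_subset_range.2 (by omega)) fun i hi hni => ?_
    have hik : k < i := by
      simp only [Finset.mem_range] at hni; omega
    have hin : i < n + 1 := Finset.mem_range.mp hi
    have : (n - i).choose (n - k) = 0 := Nat.choose_eq_zero_of_lt (by omega)
    simp [this]
  rw [Finset.sum_range_succ, Nat.choose_self] at h6
  push_cast at h6
  have h7 : p.coeff (n-k) = -∑ i ∈ Finset.range k, p.coeff (n-i) * (((n-i).choose (n-k)):ℤ) := by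
    linarith
  rw [h7]
  exact congrArg Neg.neg (Finset.sum_congr rfl fun i _ => mul_comm _ _)
end

section
/- Let M be an n×n {±1}-matrix with diagonal entries 1 such that M - I is skew-symmetric, with n odd, and write det(xI - M) = Σ a_i x^{n-i}. Then for every odd k in {1,...,n}, (n-k+1)·a_{k-1} + Σ_{i=0}^{k-2} binom(n-i, n-k)·a_i ≡ 0 mod 2^{k-1}. -/
open Matrix Polynomial Finset



lemma charmatrix_comp {n : ℕ} (A : Matrix (Fin n) (Fin n) ℤ) (t : ℤ[X]) :
    (charmatrix A).map (eval₂RingHom C t) = t • (1 : Matrix (Fin n) (Fin n) ℤ[X]) - A.map C := by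
  refine Matrix.ext fun i j => ?_
  rcases eq_or_ne i j with h | h
  · subst h
    simp only [Matrix.map_apply, charmatrix_apply_eq, Matrix.sub_apply, Matrix.smul_apply,
      Matrix.one_apply_eq, coe_eval₂RingHom, eval₂_sub, eval₂_X, eval₂_C, smul_eq_mul, mul_one]
  · simp only [Matrix.map_apply, charmatrix_apply_ne _ _ _ h, Matrix.sub_apply,
      Matrix.smul_apply, Matrix.one_apply_ne h, coe_eval₂RingHom, eval₂_neg, eval₂_C,
      smul_zero, zero_sub]

lemma charpoly_comp {n : ℕ} (A : Matrix (Fin n) (Fin n) ℤ) (t : ℤ[X]) :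
    A.charpoly.comp t = (t • (1 : Matrix (Fin n) (Fin n) ℤ[X]) - A.map C).det := by
  rw [← charmatrix_comp, Matrix.charpoly,
    show (charmatrix A).map ⇑(eval₂RingHom C t) = (eval₂RingHom C t).mapMatrix (charmatrix A)
      from rfl, ← RingHom.map_det]
  rfl

lemma coeff_comp_C_mul_X (p : ℤ[X]) (c : ℤ) (m : ℕ) :
    (p.comp (C c * X)).coeff m = c ^ m * p.coeff m := by
  induction p using Polynomial.induction_on' with
  | add f g hf hg => rw [add_comp, coeff_add, hf, hg, coeff_add, mul_add]
  | monomial e a =>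
    rw [monomial_comp, mul_pow, ← C_pow, ← mul_assoc, ← C_mul, coeff_C_mul, coeff_X_pow,
      coeff_monomial]
    by_cases h : m = e
    · subst h; simp [mul_comm]
    · simp [h, Ne.symm h]

lemma det_dvd_of_rows {ι : Type*} [DecidableEq ι] [Fintype ι] (d : ℤ[X]) (i₀ : ι)
    (B : Matrix ι ι ℤ[X]) (h : ∀ i, i ≠ i₀ → ∀ j, d ∣ B i j) :
    d ^ (Fintype.card ι - 1) ∣ B.det := by
  rw [Matrix.det_apply']
  refine Finset.dvd_sum fun σ _ => Dvd.dvd.mul_left ?_ _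
  rw [← Finset.mul_prod_erase Finset.univ _ (Finset.mem_univ (σ⁻¹ i₀))]
  refine Dvd.dvd.mul_left ?_ _
  have hcard : (Finset.univ.erase (σ⁻¹ i₀)).card = Fintype.card ι - 1 := by
    rw [Finset.card_erase_of_mem (Finset.mem_univ _), Finset.card_univ]
  calc d ^ (Fintype.card ι - 1) = ∏ _i ∈ Finset.univ.erase (σ⁻¹ i₀), d := by
        rw [Finset.prod_const, hcard]
    _ ∣ ∏ i ∈ Finset.univ.erase (σ⁻¹ i₀), B (σ i) i := by
        refine Finset.prod_dvd_prod_of_dvd _ _ fun i hi => h _ ?_ _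
        intro hcontra
        exact (Finset.mem_erase.mp hi).1 (by rw [← hcontra]; simp)

noncomputable def Lmat {n : ℕ} (hn : 0 < n) : Matrix (Fin n) (Fin n) ℤ[X] :=
  fun i l => if l = i then 1 else if l = ⟨0, hn⟩ ∧ i ≠ ⟨0, hn⟩ then -1 else 0

lemma det_Lmat {n : ℕ} (hn : 0 < n) : (Lmat hn).det = 1 := by
  rw [← Matrix.det_transpose]
  have ht : (Lmat hn)ᵀ.BlockTriangular id := by
    rw [Matrix.BlockTriangular]
    intro i j hij
    have hij' : j < i := hij
    have h1 : i ≠ j := by rintro rfl; exact absurd hij' (lt_irrefl _)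
    have h2 : ¬(i = ⟨0, hn⟩ ∧ j ≠ ⟨0, hn⟩) := by
      rintro ⟨rfl, -⟩
      exact absurd hij' (by simp [Fin.lt_def])
    simp [Lmat, Matrix.transpose_apply, h1, h2]
  rw [Matrix.det_of_upperTriangular ht]
  refine Finset.prod_eq_one fun i _ => by simp [Lmat, Matrix.transpose_apply]

lemma Lmat_mul_apply {n : ℕ} (hn : 0 < n) (A : Matrix (Fin n) (Fin n) ℤ[X]) (i : Fin n)
    (hi : i ≠ ⟨0, hn⟩) (j : Fin n) :
    (Lmat hn * A) i j = A i j - A ⟨0, hn⟩ j := by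
  rw [Matrix.mul_apply]
  have hterm : ∀ l : Fin n, Lmat hn i l * A l j =
      (if l = i then A i j else 0) + (if l = ⟨0, hn⟩ then -A ⟨0, hn⟩ j else 0) := by
    intro l
    rcases eq_or_ne l i with rfl | h1
    · simp [Lmat, (by simpa [eq_comm] using hi : ¬(l = ⟨0, hn⟩))]
    · rcases eq_or_ne l ⟨0, hn⟩ with rfl | h2
      · simp [Lmat, h1, hi]
      · simp [Lmat, h1, h2]
  rw [Finset.sum_congr rfl fun l _ => hterm l, Finset.sum_add_distrib,
    Finset.sum_ite_eq' Finset.univ i (fun _ => A i j),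
    Finset.sum_ite_eq' Finset.univ (⟨0, hn⟩ : Fin n) (fun _ => -A ⟨0, hn⟩ j)]
  simp [sub_eq_add_neg]

lemma coeff_charpoly_dvd {n : ℕ} (hn : 0 < n) (M : Matrix (Fin n) (Fin n) ℤ)
    (hent : ∀ i j, M i j = 1 ∨ M i j = -1) {k : ℕ} (hk1 : 1 ≤ k) (hkn : k ≤ n) :
    (2 : ℤ) ^ (k - 1) ∣ M.charpoly.coeff (n - k) := by
  set i₀ : Fin n := ⟨0, hn⟩ with hi₀
  set A : Matrix (Fin n) (Fin n) ℤ[X] :=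
    (C (2:ℤ) * X) • (1 : Matrix (Fin n) (Fin n) ℤ[X]) - M.map C with hA
  have hdet : M.charpoly.comp (C (2:ℤ) * X) = A.det := charpoly_comp M _
  -- divisibility of det A by 2^(n-1)
  have hLA : (2 : ℤ[X]) ^ (n - 1) ∣ A.det := by
    have h1 : A.det = (Lmat hn * A).det := by
      rw [Matrix.det_mul, det_Lmat, one_mul]
    rw [h1]
    have := det_dvd_of_rows (2 : ℤ[X]) i₀ (Lmat hn * A) ?_
    · simpa [Fintype.card_fin] using this
    · intro i hi j
      rw [Lmat_mul_apply hn A i hi j]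
      have hAij : ∀ i' : Fin n, A i' j =
          (C (2:ℤ) * X) * (1 : Matrix (Fin n) (Fin n) ℤ[X]) i' j - C (M i' j) := by
        intro i'; simp [hA, Matrix.sub_apply, Matrix.smul_apply, Matrix.map_apply, smul_eq_mul]
      rw [hAij i, hAij i₀]
      have h2 : (2 : ℤ[X]) ∣ C (M i j) - C (M i₀ j) := by
        rw [← C_sub]
        rcases hent i j with h | h <;> rcases hent i₀ j with h' | h' <;>
          simp [h, h'] <;> decide
      have h3 : (2 : ℤ[X]) ∣ (C (2:ℤ) * X) * ((1 : Matrix (Fin n) (Fin n) ℤ[X]) i j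
          - (1 : Matrix (Fin n) (Fin n) ℤ[X]) i₀ j) := by
        have : (C (2:ℤ)) = (2 : ℤ[X]) := by norm_num
        exact Dvd.dvd.mul_right (this ▸ dvd_mul_right _ _) _
      have := dvd_sub h3 h2
      convert this using 1
      ring
  obtain ⟨E, hE⟩ := hLA
  have hco : (2:ℤ) ^ (n - k) * M.charpoly.coeff (n - k) =
      2 ^ (n - 1) * E.coeff (n - k) := by
    have := congrArg (fun q => Polynomial.coeff q (n - k)) (hdet.trans hE)
    rw [coeff_comp_C_mul_X] at this
    rw [this]
    have h2pow : (2 : ℤ[X]) ^ (n - 1) = C ((2:ℤ) ^ (n-1)) := by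
      rw [C_pow]; norm_num
    rw [h2pow, coeff_C_mul]
  have hsplit : n - 1 = (n - k) + (k - 1) := by omega
  rw [hsplit, pow_add, mul_assoc] at hco
  have := mul_left_cancel₀ (a := (2:ℤ) ^ (n - k)) (pow_ne_zero _ two_ne_zero) hco
  exact ⟨E.coeff (n - k), this⟩


lemma charpoly_transpose' {n : ℕ} (A : Matrix (Fin n) (Fin n) ℤ) : Aᵀ.charpoly = A.charpoly := by
  unfold Matrix.charpoly
  rw [← Matrix.det_transpose (charmatrix Aᵀ)]
  congr 1
  refine Matrix.ext fun i j => ?_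
  rcases eq_or_ne i j with h | h
  · subst h; simp
  · simp [Matrix.transpose_apply, charmatrix_apply_ne _ _ _ h,
      charmatrix_apply_ne _ _ _ (Ne.symm h)]

lemma charpoly_sub_one {n : ℕ} (M : Matrix (Fin n) (Fin n) ℤ) :
    (M - 1).charpoly = M.charpoly.comp (X + C 1) := by
  rw [charpoly_comp, Matrix.charpoly]
  congr 1
  refine Matrix.ext fun i j => ?_
  rcases eq_or_ne i j with h | h
  · subst h
    simp only [charmatrix_apply_eq, Matrix.sub_apply, Matrix.smul_apply, Matrix.one_apply_eq,
      Matrix.map_apply, Matrix.one_apply, if_pos rfl, Matrix.sub_apply (M) 1, C_sub, C_1,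
      smul_eq_mul, mul_one]
    ring
  · simp only [charmatrix_apply_ne _ _ _ h, Matrix.sub_apply, Matrix.smul_apply,
      Matrix.one_apply_ne h, Matrix.map_apply, smul_eq_mul, mul_zero, zero_sub,
      Matrix.sub_apply M 1, C_sub]
    simp [Matrix.one_apply_ne h]

lemma charpoly_comp_neg {n : ℕ} (hodd : Odd n) (S : Matrix (Fin n) (Fin n) ℤ)
    (hskew : Sᵀ = -S) : S.charpoly.comp (C (-1) * X) = -S.charpoly := by
  rw [charpoly_comp]
  have hmat : (C (-1:ℤ) * X) • (1 : Matrix (Fin n) (Fin n) ℤ[X]) - S.map C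
      = (-1 : ℤ[X]) • charmatrix Sᵀ := by
    refine Matrix.ext fun i j => ?_
    have hS : Sᵀ i j = -S i j := by rw [hskew]; rfl
    rcases eq_or_ne i j with h | h
    · subst h
      simp only [charmatrix_apply_eq, Matrix.sub_apply, Matrix.smul_apply, Matrix.one_apply_eq,
        Matrix.map_apply, smul_eq_mul, mul_one, hS, C_neg, C_1]
      ring
    · simp only [charmatrix_apply_ne _ _ _ h, Matrix.sub_apply, Matrix.smul_apply,
        Matrix.one_apply_ne h, Matrix.map_apply, smul_eq_mul, mul_zero, zero_sub, hS, C_neg]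
      ring
  rw [hmat, Matrix.det_smul, ← Matrix.charpoly, charpoly_transpose', Fintype.card_fin,
    hodd.neg_one_pow]
  simp

lemma coeff_skew_even {n : ℕ} (hodd : Odd n) (S : Matrix (Fin n) (Fin n) ℤ)
    (hskew : Sᵀ = -S) {m : ℕ} (hm : Even m) : S.charpoly.coeff m = 0 := by
  have h := congrArg (fun q => Polynomial.coeff q m) (charpoly_comp_neg hodd S hskew)
  simp only [coeff_comp_C_mul_X, hm.neg_one_pow, one_mul, coeff_neg] at h
  linarith

lemma coeff_comp_X_add_one (p : ℤ[X]) (N m : ℕ) (h : p.natDegree < N) :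
    (p.comp (X + C 1)).coeff m = ∑ i ∈ Finset.range N, (i.choose m : ℤ) * p.coeff i := by
  conv_lhs => rw [p.as_sum_range' N h]
  rw [show (∑ i ∈ Finset.range N, (monomial i) (p.coeff i)).comp (X + C 1)
      = eval₂RingHom C (X + C 1) (∑ i ∈ Finset.range N, (monomial i) (p.coeff i)) from rfl,
    map_sum, finset_sum_coeff]
  refine Finset.sum_congr rfl fun i _ => ?_
  rw [coe_eval₂RingHom, eval₂_monomial, C_1, coeff_C_mul, coeff_X_add_one_pow, mul_comm]


/-- For an `n×n` `{±1}`-matrix `M` with unit diagonal, `M - I`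
skew-symmetric, and `n` odd, writing `det(xI - M) = Σ a_i x^(n-i)`, for every odd
`k ∈ {1,…,n}`: `(n-k+1)·a_{k-1} + Σ_{i=0}^{k-2} C(n-i, n-k)·a_i ≡ 0 mod 2^(k-1)`. -/
theorem stmt6 (n : ℕ) (hodd : Odd n) (M : Matrix (Fin n) (Fin n) ℤ)
    (hent : ∀ i j, M i j = 1 ∨ M i j = -1) (hdiag : ∀ i, M i i = 1)
    (hskew : (M - 1)ᵀ = -(M - 1)) :
    ∀ k, Odd k → 1 ≤ k → k ≤ n →
      (2 : ℤ) ^ (k - 1) ∣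
        ((n - k + 1 : ℕ) : ℤ) * M.charpoly.coeff (n - (k - 1)) +
          ∑ i ∈ Finset.range (k - 1),((n - i).choose (n - k) : ℤ) * M.charpoly.coeff (n - i) := by
  intro k hkodd hk1 hkn
  obtain ⟨k', rfl⟩ : ∃ k', k = k' + 1 := ⟨k - 1, by omega⟩
  have hn : 0 < n := hodd.pos
  have hdeg : M.charpoly.natDegree = n := by
    simpa using M.charpoly_natDegree_eq_dim
  have hq0 : ((M - 1).charpoly).coeff (n - (k' + 1)) = 0 :=
    coeff_skew_even hodd (M - 1) hskew (Nat.Odd.sub_odd hodd hkodd)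
  have hsum : ∑ i ∈ Finset.range (n + 1),
      (i.choose (n - (k' + 1)) : ℤ) * M.charpoly.coeff i = 0 := by
    rw [← coeff_comp_X_add_one M.charpoly (n + 1) (n - (k' + 1)) (by omega),
      ← charpoly_sub_one M, hq0]
  have hsum2 : ∑ i ∈ Finset.range (n + 1),
      ((n - i).choose (n - (k' + 1)) : ℤ) * M.charpoly.coeff (n - i) = 0 := by
    have h := Finset.sum_range_reflect
      (fun i => (i.choose (n - (k' + 1)) : ℤ) * M.charpoly.coeff i) (n + 1)
    simp only [Nat.add_sub_cancel] at h
    rw [h]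
    exact hsum
  have htrunc : ∑ i ∈ Finset.range (k' + 1 + 1),
      ((n - i).choose (n - (k' + 1)) : ℤ) * M.charpoly.coeff (n - i) = 0 := by
    rw [← hsum2]
    refine Finset.sum_subset (Finset.range_subset_range.mpr (by omega)) fun i hi hni => ?_
    have : n - i < n - (k' + 1) := by
      simp only [Finset.mem_range] at hi hni
      omega
    rw [Nat.choose_eq_zero_of_lt this]
    simp
  rw [Finset.sum_range_succ, Finset.sum_range_succ] at htrunc
  have e2 : (n - k').choose (n - (k' + 1)) = n - (k' + 1) + 1 := by
    rw [show n - k' = n - (k' + 1) + 1 by omega, Nat.choose_succ_self_right]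
  have e3 : (n - (k' + 1)).choose (n - (k' + 1)) = 1 := Nat.choose_self _
  simp only [Nat.add_sub_cancel]
  rw [show ((n - (k' + 1) + 1 : ℕ) : ℤ) = ((n - k').choose (n - (k' + 1)) : ℤ) by rw [e2]]
  have hfin : ((n - k').choose (n - (k' + 1)) : ℤ) * M.charpoly.coeff (n - k') +
      ∑ i ∈ Finset.range k', ((n - i).choose (n - (k' + 1)) : ℤ) * M.charpoly.coeff (n - i) =
      -M.charpoly.coeff (n - (k' + 1)) := by
    rw [e3] at htrunc
    push_cast at htrunc ⊢
    linarith
  rw [hfin]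
  exact (dvd_neg).mpr (coeff_charpoly_dvd hn M hent (by omega) hkn)
end

section
/- Let n ≥ 2 and m be positive integers. In the path P_{2n-1}, let v be the central vertex (at distance n-1 from each leaf), and in P_{2n-1+2^m} let w be a vertex at distance n-1 from the nearest leaf. Then [A(P_{2n-1})^n 𝟏]_v = 2^n - 2, [A(P_{2n-1+2^m})^n 𝟏]_w = 2^n - 1, [A(P_{2n-1})^{2n}]_{v,v} = binom(2n,n) - 2, and [A(P_{2n-1+2^m})^{2n}]_{w,w} = binom(2n,n) - 1. -/
/-- Adjacency matrix of the path graph on `n` vertices `0,…,n-1`,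
with edges `{i, i+1}`. -/
def pathAdj (n : ℕ) : Matrix (Fin n) (Fin n) ℤ :=
  fun i j => if (i.val + 1 = j.val ∨ j.val + 1 = i.val) then 1 else 0

/-- Number of walks of length `k` on `ℤ` with total displacement `d`. -/
def W : ℕ → ℤ → ℤ
  | 0, d => if d = 0 then 1 else 0
  | (k+1), d => W k (d - 1) + W k (d + 1)

lemma W_succ (k : ℕ) (d : ℤ) : W (k+1) d = W k (d - 1) + W k (d + 1) := rfl

lemma W_eq_zero (k : ℕ) : ∀ d : ℤ, (k : ℤ) < |d| → W k d = 0 := by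
  induction k with
  | zero =>
    intro d h
    have hd : d ≠ 0 := by rw [lt_abs] at h; omega
    simp [W, hd]
  | succ k ih =>
    intro d h
    rw [lt_abs] at h
    push_cast at h
    rw [W_succ, ih _ (by rw [lt_abs]; omega), ih _ (by rw [lt_abs]; omega), add_zero]

lemma W_top (k : ℕ) : W k (k : ℤ) = 1 := by
  induction k with
  | zero => simp [W]
  | succ k ih =>
    rw [W_succ]
    have e1 : ((k+1 : ℕ) : ℤ) - 1 = (k : ℤ) := by push_cast; ring
    have e2 : ((k+1 : ℕ) : ℤ) + 1 = (k : ℤ) + 2 := by push_cast; ring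
    rw [e1, e2, ih, W_eq_zero k _ (by rw [lt_abs]; omega)]
    ring

lemma W_bot (k : ℕ) : W k (-(k : ℤ)) = 1 := by
  induction k with
  | zero => simp [W]
  | succ k ih =>
    rw [W_succ]
    have e1 : -((k+1 : ℕ) : ℤ) - 1 = -((k : ℤ) + 2) := by push_cast; ring
    have e2 : -((k+1 : ℕ) : ℤ) + 1 = -(k : ℤ) := by push_cast; ring
    rw [e1, e2, ih, W_eq_zero k _ (by rw [lt_abs]; omega)]
    ring

lemma W_choose (k : ℕ) : ∀ m : ℕ, m ≤ k → W k (2*(m:ℤ) - k) = (k.choose m : ℤ) := by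
  induction k with
  | zero =>
    intro m hm
    have : m = 0 := by omega
    subst this; simp [W]
  | succ k ih =>
    intro m hm
    rw [W_succ]
    match m, hm with
    | 0, _ =>
      have e1 : 2*((0:ℕ):ℤ) - ((k+1:ℕ):ℤ) - 1 = -((k:ℤ)+2) := by push_cast; ring
      have e2 : 2*((0:ℕ):ℤ) - ((k+1:ℕ):ℤ) + 1 = -(k:ℤ) := by push_cast; ring
      rw [e1, e2, W_bot, W_eq_zero k _ (by rw [lt_abs]; omega)]
      simp
    | (m+1), hm =>
      have e1 : 2*(((m+1):ℕ):ℤ) - ((k+1:ℕ):ℤ) - 1 = 2*(m:ℤ) - k := by push_cast; ring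
      rw [e1]
      rcases Nat.lt_or_ge m k with h | h
      · have e2 : 2*(((m+1):ℕ):ℤ) - ((k+1:ℕ):ℤ) + 1 = 2*((m+1:ℕ):ℤ) - k := by push_cast; ring
        rw [e2, ih m (by omega), ih (m+1) (by omega)]
        rw [Nat.choose_succ_succ]
        push_cast; ring
      · have hmk : m = k := by omega
        subst hmk
        have e2 : 2*(((m+1):ℕ):ℤ) - ((m+1:ℕ):ℤ) + 1 = (m:ℤ) + 2 := by push_cast; ring
        have e3 : 2*(m:ℤ) - m = (m:ℤ) := by ring
        rw [e3, W_top, e2, W_eq_zero m ((m:ℤ)+2) (by rw [lt_abs]; omega)]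
        simp

/-- One step of the walk recurrence on the path graph. -/
lemma stepE (N : ℕ) (g : Fin N → ℤ) (i : Fin N) :
    (pathAdj N).mulVec g i =
      (if _h : 1 ≤ i.val then g ⟨i.val - 1, Nat.lt_of_le_of_lt (Nat.sub_le _ _) i.isLt⟩ else 0)
      + (if h : i.val + 1 < N then g ⟨i.val + 1, h⟩ else 0) := by
  classical
  simp only [Matrix.mulVec, dotProduct, pathAdj]
  have key : ∀ j : Fin N,
      (if (i.val + 1 = j.val ∨ j.val + 1 = i.val) then (1:ℤ) else 0) * g j
      = (if j.val + 1 = i.val then g j else 0) + (if i.val + 1 = j.val then g j else 0) := by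
    intro j
    split_ifs <;> first | ring1 | (exfalso; omega)
  rw [Finset.sum_congr rfl fun j _ => key j, Finset.sum_add_distrib]
  congr 1
  · by_cases h : 1 ≤ i.val
    · rw [dif_pos h]
      have he : ∀ j : Fin N, (j.val + 1 = i.val) ↔
          j = (⟨i.val - 1, Nat.lt_of_le_of_lt (Nat.sub_le _ _) i.isLt⟩ : Fin N) := by
        intro j; rw [Fin.ext_iff]; simp only [Fin.val_mk]; omega
      simp only [he]
      simp [Finset.sum_ite_eq']
    · rw [dif_neg h]
      apply Finset.sum_eq_zero
      intro j _; rw [if_neg]; omega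
  · by_cases h : i.val + 1 < N
    · rw [dif_pos h]
      have he : ∀ j : Fin N, (i.val + 1 = j.val) ↔ j = (⟨i.val + 1, h⟩ : Fin N) := by
        intro j; rw [Fin.ext_iff]; simp only [Fin.val_mk]; omega
      simp only [he]
      simp [Finset.sum_ite_eq']
    · rw [dif_neg h]
      apply Finset.sum_eq_zero
      intro j _; rw [if_neg]; omega

/-- Walk counts from a vertex near the boundary. -/
lemma lemA (N : ℕ) (j : ℕ) : ∀ (i : Fin N), j ≤ i.val + 1 → j + i.val ≤ N →
    ((pathAdj N ^ j).mulVec (fun _ => (1:ℤ))) i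
      = 2^j - (if i.val + 1 = j then 1 else 0) - (if N - i.val = j then 1 else 0) := by
  induction j with
  | zero =>
    intro i _ _
    have hiN := i.isLt
    rw [pow_zero, Matrix.one_mulVec]
    rw [if_neg (by omega), if_neg (by omega)]
    norm_num
  | succ j ih =>
    intro i h1 h2
    have hiN := i.isLt
    rw [pow_succ', ← Matrix.mulVec_mulVec, stepE]
    rcases Nat.eq_zero_or_pos j with hj | hj
    · subst hj
      rw [pow_zero, Matrix.one_mulVec]
      split_ifs <;> omega
    · have hi1 : 1 ≤ i.val := by omega
      have hi2 : i.val + 1 < N := by omega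
      rw [dif_pos hi1, dif_pos hi2,
        ih ⟨i.val - 1, Nat.lt_of_le_of_lt (Nat.sub_le _ _) i.isLt⟩ (by simp; omega) (by simp; omega),
        ih ⟨i.val + 1, hi2⟩ (by simp; omega) (by simp; omega)]
      simp only [Fin.val_mk]
      have A1 : (if i.val - 1 + 1 = j then (1:ℤ) else 0) = (if i.val + 1 = j + 1 then 1 else 0) := by
        split_ifs <;> first | rfl | omega
      have A2 : (if N - (i.val - 1) = j then (1:ℤ) else 0) = 0 := by rw [if_neg]; omega
      have A3 : (if i.val + 1 + 1 = j then (1:ℤ) else 0) = 0 := by rw [if_neg]; omega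
      have A4 : (if N - (i.val + 1) = j then (1:ℤ) else 0) = (if N - i.val = j + 1 then 1 else 0) := by
        split_ifs <;> first | rfl | omega
      rw [A1, A2, A3, A4, pow_succ]
      ring

/-- Walk counts to a fixed vertex, via the reflection principle. -/
lemma lemB (N : ℕ) (hN : 2 ≤ N) (v : Fin N) :
    ∀ (k : ℕ), k ≤ N + 1 → ∀ i : Fin N,
    ((pathAdj N ^ k).mulVec (fun j => if j = v then (1:ℤ) else 0)) i
      = W k ((v.val:ℤ) - i.val) - W k ((v.val:ℤ) + i.val + 2)
        - W k ((v.val:ℤ) + i.val - 2*N) := by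
  intro k
  induction k with
  | zero =>
    intro _ i
    have hv := v.isLt
    have hi := i.isLt
    rw [pow_zero, Matrix.one_mulVec]
    rw [W_eq_zero 0 ((v.val:ℤ) + i.val + 2) (by rw [lt_abs]; push_cast; omega),
      W_eq_zero 0 ((v.val:ℤ) + i.val - 2*N) (by rw [lt_abs]; push_cast; omega)]
    by_cases h : i = v
    · subst h
      rw [if_pos rfl]
      simp [W]
    · have hne : ((v.val:ℤ) - i.val) ≠ 0 := by
        have : v.val ≠ i.val := fun e => h (Fin.ext e.symm)
        omega
      rw [if_neg h]
      simp [W, hne]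
  | succ k ih =>
    intro hk i
    have hk' : k ≤ N + 1 := by omega
    have hkN : k ≤ N := by omega
    have hv := v.isLt
    have hi := i.isLt
    rw [pow_succ', ← Matrix.mulVec_mulVec, stepE]
    by_cases h0 : 1 ≤ i.val <;> by_cases h1 : i.val + 1 < N
    · -- interior
      rw [dif_pos h0, dif_pos h1, ih hk' _, ih hk' _]
      simp only [Fin.val_mk]
      have c1 : ((i.val - 1 : ℕ) : ℤ) = (i.val:ℤ) - 1 := by omega
      have c2 : ((i.val + 1 : ℕ) : ℤ) = (i.val:ℤ) + 1 := by push_cast; ring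
      rw [c1, c2, W_succ, W_succ, W_succ]
      have r1 : (v.val:ℤ) - ((i.val:ℤ) - 1) = ((v.val:ℤ) - i.val) + 1 := by ring
      have r2 : (v.val:ℤ) + ((i.val:ℤ) - 1) + 2 = ((v.val:ℤ) + i.val + 2) - 1 := by ring
      have r3 : (v.val:ℤ) + ((i.val:ℤ) - 1) - 2*N = ((v.val:ℤ) + i.val - 2*N) - 1 := by ring
      have r4 : (v.val:ℤ) - ((i.val:ℤ) + 1) = ((v.val:ℤ) - i.val) - 1 := by ring
      have r5 : (v.val:ℤ) + ((i.val:ℤ) + 1) + 2 = ((v.val:ℤ) + i.val + 2) + 1 := by ring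
      have r6 : (v.val:ℤ) + ((i.val:ℤ) + 1) - 2*N = ((v.val:ℤ) + i.val - 2*N) + 1 := by ring
      rw [r1, r2, r3, r4, r5, r6]
      ring
    · -- i = N - 1
      have hiv : (i.val:ℤ) = (N:ℤ) - 1 := by omega
      rw [dif_pos h0, dif_neg h1, ih hk' _, add_zero]
      simp only [Fin.val_mk]
      have c1 : ((i.val - 1 : ℕ) : ℤ) = (N:ℤ) - 2 := by omega
      rw [c1, hiv, W_succ, W_succ, W_succ]
      have e1 : (v.val:ℤ) - ((N:ℤ)-1) - 1 = (v.val:ℤ) - (N:ℤ) := by ring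
      have e2 : (v.val:ℤ) - ((N:ℤ)-1) + 1 = (v.val:ℤ) - ((N:ℤ)-2) := by ring
      have e3 : (v.val:ℤ) + ((N:ℤ)-1) + 2 - 1 = (v.val:ℤ) + ((N:ℤ)-2) + 2 := by ring
      have e4 : (v.val:ℤ) + ((N:ℤ)-1) + 2 + 1 = (v.val:ℤ) + (N:ℤ) + 2 := by ring
      have e5 : (v.val:ℤ) + ((N:ℤ)-1) - 2*N - 1 = (v.val:ℤ) + ((N:ℤ)-2) - 2*N := by ring
      have e6 : (v.val:ℤ) + ((N:ℤ)-1) - 2*N + 1 = (v.val:ℤ) - (N:ℤ) := by ring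
      rw [e1, e2, e3, e4, e5, e6,
        W_eq_zero k ((v.val:ℤ) + (N:ℤ) + 2) (by rw [lt_abs]; omega)]
      ring
    · -- i = 0
      have hiv : (i.val:ℤ) = 0 := by omega
      rw [dif_neg h0, dif_pos h1, ih hk' _, zero_add]
      simp only [Fin.val_mk]
      have c2 : ((i.val + 1 : ℕ) : ℤ) = 1 := by omega
      rw [c2, hiv, W_succ, W_succ, W_succ]
      have e1 : (v.val:ℤ) - 0 - 1 = (v.val:ℤ) - 1 := by ring
      have e2 : (v.val:ℤ) - 0 + 1 = (v.val:ℤ) + 1 := by ring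
      have e3 : (v.val:ℤ) + 0 + 2 - 1 = (v.val:ℤ) + 1 := by ring
      have e4 : (v.val:ℤ) + 0 + 2 + 1 = (v.val:ℤ) + 1 + 2 := by ring
      have e5 : (v.val:ℤ) + 0 - 2*N - 1 = (v.val:ℤ) - 2*N - 1 := by ring
      have e6 : (v.val:ℤ) + 0 - 2*N + 1 = (v.val:ℤ) + 1 - 2*N := by ring
      rw [e1, e2, e3, e4, e5, e6,
        W_eq_zero k ((v.val:ℤ) - 2*N - 1) (by rw [lt_abs]; omega)]
      ring
    · exfalso; omega

lemma toDiag (N : ℕ) (M : Matrix (Fin N) (Fin N) ℤ) (u : Fin N) :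
    M.mulVec (fun j => if j = u then (1:ℤ) else 0) u = M u u := by
  simp [Matrix.mulVec, dotProduct, mul_ite, mul_one, mul_zero]

/-- Walk counts for `(n-1)`-central vertices in the paths `P_{2n-1}`
and `P_{2n-1+2^m}` (Proposition 4.3(i)). -/
theorem stmt10 (n m : ℕ) (hn : 2 ≤ n) (hm : 1 ≤ m)
    (v : Fin (2 * n - 1)) (w : Fin (2 * n - 1 + 2 ^ m))
    (hv : min v.val ((2 * n - 1) - 1 - v.val) = n - 1)
    (hw : min w.val ((2 * n - 1 + 2 ^ m) - 1 - w.val) = n - 1) :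
    ((pathAdj (2 * n - 1) ^ n).mulVec (fun _ => 1)) v = 2 ^ n - 2 ∧
    ((pathAdj (2 * n - 1 + 2 ^ m) ^ n).mulVec (fun _ => 1)) w = 2 ^ n - 1 ∧
    (pathAdj (2 * n - 1) ^ (2 * n)) v v = ((2 * n).choose n : ℤ) - 2 ∧
    (pathAdj (2 * n - 1 + 2 ^ m) ^ (2 * n)) w w = ((2 * n).choose n : ℤ) - 1 := by
  have hvlt := v.isLt
  have hv' : v.val = n - 1 := by omega
  have h2m : 2 ≤ 2 ^ m := by
    have : 2 ^ 1 ≤ 2 ^ m := Nat.pow_le_pow_right (by norm_num) hm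
    simpa using this
  have hwlt : w.val < 2 * n - 1 + 2 ^ m := w.isLt
  have hw' : w.val = n - 1 ∨ w.val = n - 1 + 2 ^ m := by omega
  have hcast : ((2 * n - 1 + 2 ^ m : ℕ) : ℤ) = 2 * (n:ℤ) - 1 + ((2 ^ m : ℕ) : ℤ) := by omega
  have h2mz : (2:ℤ) ≤ ((2 ^ m : ℕ) : ℤ) := by exact_mod_cast h2m
  refine ⟨?_, ?_, ?_, ?_⟩
  · rw [lemA (2*n-1) n v (by omega) (by omega), if_pos (by omega), if_pos (by omega)]
    ring
  · rw [lemA (2*n-1+2^m) n w (by omega) (by omega)]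
    rcases hw' with h | h
    · rw [if_pos (by omega), if_neg (by omega)]
      ring
    · rw [if_neg (by omega), if_pos (by omega)]
      ring
  · rw [← toDiag _ (pathAdj (2*n-1) ^ (2*n)) v, lemB (2*n-1) (by omega) v (2*n) (by omega) v]
    have t1 : (v.val:ℤ) - (v.val:ℤ) = 2*(n:ℤ) - ((2*n:ℕ):ℤ) := by push_cast; ring
    have t2 : (v.val:ℤ) + (v.val:ℤ) + 2 = ((2*n:ℕ):ℤ) := by omega
    have t3 : (v.val:ℤ) + (v.val:ℤ) - 2*((2*n-1:ℕ):ℤ) = -((2*n:ℕ):ℤ) := by omega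
    rw [t1, t2, t3, W_choose (2*n) n (by omega), W_top, W_bot]
    ring
  · rw [← toDiag _ (pathAdj (2*n-1+2^m) ^ (2*n)) w,
      lemB (2*n-1+2^m) (by omega) w (2*n) (by omega) w]
    have t1 : (w.val:ℤ) - (w.val:ℤ) = 2*(n:ℤ) - ((2*n:ℕ):ℤ) := by push_cast; ring
    rw [t1, W_choose (2*n) n (by omega)]
    rcases hw' with h | h
    · have t2 : (w.val:ℤ) + (w.val:ℤ) + 2 = ((2*n:ℕ):ℤ) := by omega
      have z3 : W (2*n) ((w.val:ℤ) + (w.val:ℤ) - 2*((2*n-1+2^m:ℕ):ℤ)) = 0 := by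
        apply W_eq_zero
        rw [lt_abs, hcast]
        omega
      rw [t2, W_top, z3]
      ring
    · have z2 : W (2*n) ((w.val:ℤ) + (w.val:ℤ) + 2) = 0 := by
        apply W_eq_zero
        rw [lt_abs]
        omega
      have t3 : (w.val:ℤ) + (w.val:ℤ) - 2*((2*n-1+2^m:ℕ):ℤ) = -((2*n:ℕ):ℤ) := by
        rw [hcast]; omega
      rw [z2, t3, W_bot]
      ring
end

section
/- Let Γ₁ and Γ₂ be tournaments, and let Γ₁ ⊕ Γ₂ be the tournament whose adjacency matrix is the block matrix [[A₁, 0],[J, A₂]] (all arcs from Γ₂'s vertices to Γ₁'s vertices). Then for every k ∈ ℕ, 𝟏ᵀA(Γ₁⊕Γ₂)^k 𝟏 = 𝟏ᵀA₁^k 𝟏 + 𝟏ᵀA₂^k 𝟏 + Σ_{i=1}^{k} (𝟏ᵀA₁^{i-1}𝟏)·(𝟏ᵀA₂^{k-i}𝟏). -/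
/-- A `{0,1}` matrix is the adjacency matrix of a tournament: zero diagonal and,
for each pair of distinct indices, exactly one of the two opposite arcs present. -/
def IsTournament {V : Type*} (A : Matrix V V ℤ) : Prop :=
  (∀ i, A i i = 0) ∧
    ∀ i j, i ≠ j → (A i j = 1 ∧ A j i = 0) ∨ (A i j = 0 ∧ A j i = 1)

/-- Walk counts in the join `Γ₁ ⊕ Γ₂` of two tournaments, whose
adjacency matrix is the block matrix `[[A₁, 0], [J, A₂]]`. -/
theorem stmt12 (m l : ℕ) (A₁ : Matrix (Fin m) (Fin m) ℤ) (A₂ : Matrix (Fin l) (Fin l) ℤ)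
    (h₁ : IsTournament A₁) (h₂ : IsTournament A₂) (k : ℕ) :
    (∑ u, ∑ v, ((Matrix.fromBlocks A₁ 0 (Matrix.of fun _ _ => 1) A₂) ^ k) u v) =
      (∑ u, ∑ v, (A₁ ^ k) u v) + (∑ u, ∑ v, (A₂ ^ k) u v) +
        ∑ i ∈ Finset.Icc 1 k,
          (∑ u, ∑ v, (A₁ ^ (i - 1)) u v) * (∑ u, ∑ v, (A₂ ^ (k - i)) u v) := by
  classical
  set J : Matrix (Fin l) (Fin m) ℤ := Matrix.of fun _ _ => 1 with hJ
  set C : ℕ → Matrix (Fin l) (Fin m) ℤ :=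
    fun n => ∑ j ∈ Finset.range n, A₂ ^ (n - 1 - j) * J * A₁ ^ j with hC
  have key : ∀ n, (Matrix.fromBlocks A₁ 0 J A₂) ^ n
      = Matrix.fromBlocks (A₁ ^ n) 0 (C n) (A₂ ^ n) := by
    intro n
    induction n with
    | zero => simp [hC, ← Matrix.fromBlocks_one]
    | succ n ih =>
      have hCsucc : C (n + 1) = J * A₁ ^ n + A₂ * C n := by
        rw [hC]
        simp only
        rw [Finset.sum_range_succ, Matrix.mul_sum]
        rw [add_comm]
        congr 1
        · simp
        · apply Finset.sum_congr rfl
          intro j hj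
          have hjn : j < n := Finset.mem_range.mp hj
          have : n + 1 - 1 - j = (n - 1 - j) + 1 := by omega
          rw [this, pow_succ']; simp [Matrix.mul_assoc]
      rw [pow_succ', ih, Matrix.fromBlocks_multiply, hCsucc]
      congr 1 <;> simp [pow_succ']
  rw [key]
  have entry : ∀ a b, (∑ u, ∑ v, (A₂ ^ a * J * A₁ ^ b) u v)
      = (∑ u, ∑ v, (A₂ ^ a) u v) * (∑ u, ∑ v, (A₁ ^ b) u v) := by
    intro a b
    have h1 : ∀ u v, (A₂ ^ a * J * A₁ ^ b) u v
        = ∑ q, (∑ p, (A₂ ^ a) u p) * (A₁ ^ b) q v := by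
      intro u v
      simp [Matrix.mul_apply, hJ, Finset.sum_mul]
    simp only [h1]
    rw [Finset.sum_mul_sum]
    apply Finset.sum_congr rfl
    intro u _
    rw [Finset.sum_comm]
    apply Finset.sum_congr rfl
    intro q _
    rw [← Finset.mul_sum]
  have hCk : (∑ u, ∑ v, C k u v)
      = ∑ j ∈ Finset.range k, (∑ u, ∑ v, (A₂ ^ (k - 1 - j) * J * A₁ ^ j) u v) := by
    rw [hC]
    simp only [Matrix.sum_apply]
    rw [Finset.sum_congr rfl (fun u _ => (Finset.sum_comm :
      (∑ v, ∑ c ∈ Finset.range k, (A₂ ^ (k - 1 - c) * J * A₁ ^ c) u v) = _)),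
      Finset.sum_comm]
  have hRHS : (∑ i ∈ Finset.Icc 1 k,
        (∑ u, ∑ v, (A₁ ^ (i - 1)) u v) * (∑ u, ∑ v, (A₂ ^ (k - i)) u v))
      = ∑ j ∈ Finset.range k,
        (∑ u, ∑ v, (A₂ ^ (k - 1 - j)) u v) * (∑ u, ∑ v, (A₁ ^ j) u v) := by
    rw [← Finset.Ico_add_one_right_eq_Icc, Finset.sum_Ico_eq_sum_range]
    apply Finset.sum_congr (by norm_num)
    intro j _
    have e1 : 1 + j - 1 = j := by omega
    have e2 : k - (1 + j) = k - 1 - j := by omega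
    rw [e1, e2, mul_comm]
  simp only [Fintype.sum_sum_type, Matrix.fromBlocks_apply₁₁, Matrix.fromBlocks_apply₁₂,
    Matrix.fromBlocks_apply₂₁, Matrix.fromBlocks_apply₂₂, Matrix.zero_apply,
    Finset.sum_const_zero, add_zero, Finset.sum_add_distrib]
  rw [hCk, hRHS]
  simp only [entry]
  ring
end

section
/- Define the walk polynomial of a tournament Γ of degree d as Walk_{Γ,d}(x) = x^d + Σ_{i=1}^{d} (𝟏ᵀA(Γ)^{i-1}𝟏)·x^{d-i}. Then for any two tournaments Γ₁, Γ₂ and their join Γ = Γ₁ ⊕ Γ₂ (all arcs from Γ₂ to Γ₁), Walk_{Γ,d}(x) = Walk_{Γ₁,d}(x)·Walk_{Γ₂,d}(x) as polynomials, truncated appropriately: the coefficient of x^{d-k} in the product equals 𝟏ᵀA(Γ)^{k-1}𝟏 for each k ∈ {1,...,d}. -/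
open Polynomial

/-- The walk polynomial of a tournament with adjacency matrix `A`, of degree `d`:
`Walk_{Γ,d}(x) = x^d + Σ_{i=1}^d (𝟏ᵀA^{i-1}𝟏)·x^{d-i}`. -/
noncomputable def walkPoly {V : Type*} [Fintype V] [DecidableEq V] (A : Matrix V V ℤ) (d : ℕ) :
    Polynomial ℤ :=
  X ^ d + ∑ i ∈ Finset.Icc 1 d, C (∑ u, ∑ v, (A ^ (i - 1)) u v) * X ^ (d - i)

namespace Stmt13Aux

def s {V : Type*} [Fintype V] [DecidableEq V] (A : Matrix V V ℤ) (i : ℕ) : ℤ :=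
  ∑ u, ∑ v, (A ^ i) u v

def g {V : Type*} [Fintype V] [DecidableEq V] (A : Matrix V V ℤ) : ℕ → ℤ
  | 0 => 1
  | (i + 1) => s A i

lemma walkPoly_eq {V : Type*} [Fintype V] [DecidableEq V] (A : Matrix V V ℤ) (d : ℕ) :
    walkPoly A d = ∑ i ∈ Finset.range (d + 1), C (g A i) * X ^ (d - i) := by
  rw [walkPoly, Finset.sum_range_succ']
  have h1 : ∑ i ∈ Finset.Icc 1 d, C (∑ u, ∑ v, (A ^ (i - 1)) u v) * X ^ (d - i)
      = ∑ i ∈ Finset.range d, C (g A (i + 1)) * X ^ (d - (i + 1)) := by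
    rw [← Finset.Ico_add_one_right_eq_Icc, Finset.sum_Ico_eq_sum_range]
    apply Finset.sum_congr (by norm_num)
    intro i _
    have h : 1 + i - 1 = i := by omega
    rw [h]
    congr 2
    omega
  rw [h1]
  simp [g]
  ring

variable {m l : ℕ}

def Jmat (l m : ℕ) : Matrix (Fin l) (Fin m) ℤ := Matrix.of fun _ _ => 1

lemma pow_blocks (A₁ : Matrix (Fin m) (Fin m) ℤ) (A₂ : Matrix (Fin l) (Fin l) ℤ) (n : ℕ) :
    (Matrix.fromBlocks A₁ 0 (Jmat l m) A₂) ^ n =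
      Matrix.fromBlocks (A₁ ^ n) 0
        (∑ p ∈ Finset.range n, A₂ ^ p * Jmat l m * A₁ ^ (n - 1 - p))
        (A₂ ^ n) := by
  induction n with
  | zero => simp [Matrix.fromBlocks_one]
  | succ n ih =>
    rw [pow_succ, ih, Matrix.fromBlocks_multiply]
    have hmid : (∑ p ∈ Finset.range n, A₂ ^ p * Jmat l m * A₁ ^ (n - 1 - p)) * A₁
          + A₂ ^ n * Jmat l m
        = ∑ p ∈ Finset.range (n + 1), A₂ ^ p * Jmat l m * A₁ ^ (n + 1 - 1 - p) := by
      rw [Finset.sum_range_succ, Matrix.sum_mul]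
      congr 1
      · apply Finset.sum_congr rfl
        intro p hp
        simp only [Finset.mem_range] at hp
        rw [Matrix.mul_assoc, ← pow_succ]
        congr 2
        omega
      · have h0 : n + 1 - 1 - n = 0 := by omega
        rw [h0, pow_zero, Matrix.mul_one]
    simp only [Matrix.zero_mul, Matrix.mul_zero, add_zero, zero_add]
    rw [← pow_succ, ← pow_succ, hmid]

lemma sandwich (B : Matrix (Fin l) (Fin l) ℤ) (Cm : Matrix (Fin m) (Fin m) ℤ) :
    (∑ u, ∑ v, (B * Jmat l m * Cm) u v)
      = (∑ u, ∑ v, B u v) * (∑ u, ∑ v, Cm u v) := by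
  have h : ∀ u v, (B * Jmat l m * Cm) u v = (∑ a, B u a) * (∑ x, Cm x v) := by
    intro u v
    simp only [Matrix.mul_apply, Jmat, Matrix.of_apply, mul_one]
    rw [Finset.mul_sum]
  simp only [h]
  rw [Finset.sum_mul]
  apply Finset.sum_congr rfl
  intro u _
  rw [← Finset.mul_sum]
  congr 1
  exact Finset.sum_comm

lemma sum_blocks (A₁ : Matrix (Fin m) (Fin m) ℤ) (A₂ : Matrix (Fin l) (Fin l) ℤ) (n : ℕ) :
    (∑ u, ∑ v, ((Matrix.fromBlocks A₁ 0 (Jmat l m) A₂) ^ n) u v)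
      = s A₁ n + s A₂ n + ∑ p ∈ Finset.range n, s A₂ p * s A₁ (n - 1 - p) := by
  rw [pow_blocks]
  rw [Fintype.sum_sum_type]
  simp only [Fintype.sum_sum_type, Matrix.fromBlocks_apply₁₁, Matrix.fromBlocks_apply₁₂,
    Matrix.fromBlocks_apply₂₁, Matrix.fromBlocks_apply₂₂, Matrix.zero_apply,
    Finset.sum_const_zero, add_zero]
  have hS : ∀ u v, (∑ p ∈ Finset.range n, A₂ ^ p * Jmat l m * A₁ ^ (n - 1 - p)) u v
      = ∑ p ∈ Finset.range n, (A₂ ^ p * Jmat l m * A₁ ^ (n - 1 - p)) u v := by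
    intro u v; rw [Matrix.sum_apply]
  simp only [hS]
  rw [Finset.sum_add_distrib]
  have key : (∑ u : Fin l, ∑ v : Fin m,
      ∑ p ∈ Finset.range n, (A₂ ^ p * Jmat l m * A₁ ^ (n - 1 - p)) u v)
      = ∑ p ∈ Finset.range n, s A₂ p * s A₁ (n - 1 - p) := by
    have h1 : ∀ u : Fin l, (∑ v : Fin m,
        ∑ p ∈ Finset.range n, (A₂ ^ p * Jmat l m * A₁ ^ (n - 1 - p)) u v)
        = ∑ p ∈ Finset.range n, ∑ v : Fin m, (A₂ ^ p * Jmat l m * A₁ ^ (n - 1 - p)) u v :=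
      fun u => Finset.sum_comm
    simp only [h1]
    rw [Finset.sum_comm]
    exact Finset.sum_congr rfl fun p _ => sandwich _ _
  rw [key]
  unfold s
  ring

lemma coeff_mul_walk (A₁ : Matrix (Fin m) (Fin m) ℤ) (A₂ : Matrix (Fin l) (Fin l) ℤ)
    (d k : ℕ) (hk1 : 1 ≤ k) (hk : k ≤ d) :
    (walkPoly A₁ d * walkPoly A₂ d).coeff (2 * d - k)
      = ∑ i ∈ Finset.range (k + 1), g A₁ i * g A₂ (k - i) := by
  rw [walkPoly_eq, walkPoly_eq, Finset.sum_mul_sum]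
  simp only [Polynomial.finset_sum_coeff]
  have hterm : ∀ (a b : ℤ) (p q : ℕ),
      (C a * X ^ p * (C b * X ^ q)).coeff (2 * d - k)
        = if 2 * d - k = p + q then a * b else 0 := by
    intro a b p q
    rw [mul_mul_mul_comm, ← C_mul, ← pow_add, coeff_C_mul, coeff_X_pow]
    split <;> simp
  simp only [hterm]
  have hinner : ∀ i ∈ Finset.range (d + 1),
      (∑ j ∈ Finset.range (d + 1),
        if 2 * d - k = d - i + (d - j) then g A₁ i * g A₂ j else 0)
      = if i ≤ k then g A₁ i * g A₂ (k - i) else 0 := by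
    intro i hi
    simp only [Finset.mem_range] at hi
    by_cases hik : i ≤ k
    · rw [if_pos hik, Finset.sum_eq_single (k - i)]
      · rw [if_pos (by omega)]
      · intro j hj hne
        simp only [Finset.mem_range] at hj
        rw [if_neg (by omega)]
      · intro h
        exact absurd (Finset.mem_range.2 (by omega)) h
    · rw [if_neg hik]
      apply Finset.sum_eq_zero
      intro j hj
      simp only [Finset.mem_range] at hj
      rw [if_neg (by omega)]
  rw [Finset.sum_congr rfl hinner]
  rw [← Finset.sum_subset (Finset.range_subset_range.2 (by omega : k + 1 ≤ d + 1))
    (fun x _ hx => by rw [if_neg (by simp only [Finset.mem_range] at hx ⊢; omega)])]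
  apply Finset.sum_congr rfl
  intro i hi
  simp only [Finset.mem_range] at hi
  rw [if_pos (by omega)]

end Stmt13Aux

open Stmt13Aux in
/-- For tournaments `Γ₁, Γ₂` and their join `Γ = Γ₁ ⊕ Γ₂`, the walk
polynomial of `Γ` is the (suitably truncated) product of those of `Γ₁` and `Γ₂`:
for each `k ∈ {1,…,d}`, the coefficient of `x^{2d-k}` in
`Walk_{Γ₁,d}·Walk_{Γ₂,d}` equals `𝟏ᵀA(Γ)^{k-1}𝟏`. -/
theorem stmt13 (m l : ℕ) (A₁ : Matrix (Fin m) (Fin m) ℤ) (A₂ : Matrix (Fin l) (Fin l) ℤ)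
    (h₁ : IsTournament A₁) (h₂ : IsTournament A₂) (d : ℕ) :
    ∀ k, 1 ≤ k → k ≤ d →
      (walkPoly A₁ d * walkPoly A₂ d).coeff (2 * d - k) =
        ∑ u, ∑ v, ((Matrix.fromBlocks A₁ 0 (Matrix.of fun _ _ => 1) A₂) ^ (k - 1)) u v := by
  intro k hk1 hkd
  obtain ⟨n, rfl⟩ : ∃ n, k = n + 1 := ⟨k - 1, by omega⟩
  have hJ : (Matrix.of fun _ _ => (1 : ℤ)) = Jmat l m := rfl
  rw [coeff_mul_walk A₁ A₂ d (n + 1) hk1 hkd, hJ]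
  have hn : n + 1 - 1 = n := by omega
  rw [hn, sum_blocks]
  rw [Finset.sum_range_succ, Finset.sum_range_succ']
  have h2 : ∀ i ∈ Finset.range n,
      g A₁ (i + 1) * g A₂ (n + 1 - (i + 1)) = s A₁ i * s A₂ (n - 1 - i) := by
    intro i hi
    simp only [Finset.mem_range] at hi
    have h : n + 1 - (i + 1) = (n - 1 - i) + 1 := by omega
    rw [h]
    rfl
  rw [Finset.sum_congr rfl h2]
  have h3 : ∑ i ∈ Finset.range n, s A₁ i * s A₂ (n - 1 - i)
      = ∑ p ∈ Finset.range n, s A₂ p * s A₁ (n - 1 - p) := by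
    rw [← Finset.sum_range_reflect]
    apply Finset.sum_congr rfl
    intro i hi
    simp only [Finset.mem_range] at hi
    have h : n - 1 - (n - 1 - i) = i := by omega
    rw [h, mul_comm]
  rw [h3]
  simp [g]
  ring
end

section
/- Let T_t be the almost transitive tournament on vertices {0,1,...,t+1}: there is an arc from i to j whenever i < j, except the arc between 0 and t+1 is reversed (arc from t+1 to 0). Then det(xI - A(T_t)) = x^{t+2} - Σ_{i=1}^{t} binom(t,i)·x^{t-i}. -/
open Polynomial Matrix

/-- Adjacency matrix of the almost transitive tournament `T_t` on vertices
`{0,…,t+1}`: arc from `i` to `j` whenever `i < j`, except the arc between `0` and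
`t+1` is reversed. -/
def almostTransMat (t : ℕ) : Matrix (Fin (t + 2)) (Fin (t + 2)) ℤ :=
  fun i j =>
    if (i.val < j.val ∧ ¬(i.val = 0 ∧ j.val = t + 1)) ∨ (i.val = t + 1 ∧ j.val = 0)
    then 1 else 0



noncomputable def Dm (k : ℕ) : Matrix (Fin k) (Fin k) (Polynomial ℤ) :=
  fun i j => if i.val = j.val + 1 then X else if i.val ≤ j.val then -1 else 0

noncomputable def Cm (m : ℕ) : Matrix (Fin m) (Fin m) (Polynomial ℤ) :=
  fun i j => if i.val = j.val + 1 then X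
    else if i.val ≤ j.val then (if i.val = 0 ∧ j.val = m - 1 then 0 else -1) else 0

lemma detD : ∀ k, (Dm (k+1)).det = (-1)^(k+1) * (1+X)^k := by
  intro k
  induction k with
  | zero => simp [Dm, Matrix.det_fin_one]
  | succ k ih =>
    rw [det_succ_column_zero, Fin.sum_univ_succ, Fin.sum_univ_succ]
    have h1 : (Dm (k+2)).submatrix (Fin.succAbove 0) Fin.succ = Dm (k+1) := by
      ext a b : 2
      simp [Dm, Fin.succAbove, Matrix.submatrix_apply]
    have h2 : (Dm (k+2)).submatrix (Fin.succAbove 1) Fin.succ = Dm (k+1) := by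
      ext a b : 2
      induction a using Fin.cases with
      | zero => simp [Dm, Fin.succAbove, Matrix.submatrix_apply]
      | succ a => simp [Dm, Fin.succAbove, Matrix.submatrix_apply, Fin.lt_def]
    have h3 : ∀ i : Fin k, Dm (k+2) i.succ.succ 0 = 0 := by
      intro i; simp [Dm]
    have e0 : Dm (k+2) 0 0 = -1 := by simp [Dm]
    have e1 : Dm (k+2) 1 0 = X := by simp [Dm]
    simp only [show (Fin.succ 0 : Fin (k+2)) = 1 from rfl]
    rw [h1, h2, e0, e1, ih, Finset.sum_eq_zero (fun i _ => by rw [h3 i]; ring)]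
    simp [Fin.val_zero]
    ring

lemma detC : ∀ m, (Cm (m+1)).det = (-1)^(m+1) * ((1+X)^m - X^m) := by
  intro m
  induction m with
  | zero => simp [Cm, Matrix.det_fin_one]
  | succ m ih =>
    rw [det_succ_column_zero, Fin.sum_univ_succ, Fin.sum_univ_succ]
    have h1 : (Cm (m+2)).submatrix (Fin.succAbove 0) Fin.succ = Dm (m+1) := by
      ext a b : 2
      simp [Cm, Dm, Fin.succAbove, Matrix.submatrix_apply]
    have h2 : (Cm (m+2)).submatrix (Fin.succAbove 1) Fin.succ = Cm (m+1) := by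
      ext a b : 2
      induction a using Fin.cases with
      | zero => simp [Cm, Fin.succAbove, Matrix.submatrix_apply]
      | succ a => simp [Cm, Fin.succAbove, Matrix.submatrix_apply, Fin.lt_def]
    have h3 : ∀ i : Fin m, Cm (m+2) i.succ.succ 0 = 0 := by
      intro i; simp [Cm]
    have e0 : Cm (m+2) 0 0 = -1 := by simp [Cm]
    have e1 : Cm (m+2) 1 0 = X := by simp [Cm]
    simp only [show (Fin.succ 0 : Fin (m+2)) = 1 from rfl]
    rw [h1, h2, e0, e1, ih, detD, Finset.sum_eq_zero (fun i _ => by rw [h3 i]; ring)]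
    simp [Fin.val_zero]
    ring

/-- `det(xI - A(T_t)) = x^{t+2} - Σ_{i=1}^t C(t,i) x^{t-i}`. -/
theorem stmt14 (t : ℕ) :
    (almostTransMat t).charpoly =
      X ^ (t + 2) - ∑ i ∈ Finset.Icc 1 t, C ((t.choose i : ℤ)) * X ^ (t - i) := by
  have hB : ∀ i j : Fin (t+2), (almostTransMat t).charmatrix i j =
      if i = j then X
      else if (i.val < j.val ∧ ¬(i.val = 0 ∧ j.val = t + 1)) ∨ (i.val = t + 1 ∧ j.val = 0)
        then -1 else 0 := by
    intro i j
    rcases eq_or_ne i j with rfl | hne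
    · rw [charmatrix_apply_eq]
      have : almostTransMat t i i = 0 := by
        simp only [almostTransMat]
        rw [if_neg]; omega
      rw [this]; simp
    · rw [charmatrix_apply_ne _ _ _ hne, if_neg hne]
      simp only [almostTransMat]
      split_ifs <;> simp
  set B := (almostTransMat t).charmatrix with hBdef
  have hminor0 : (B.submatrix (Fin.succAbove 0) Fin.succ).det = X ^ (t+1) := by
    have htri : (B.submatrix (Fin.succAbove 0) Fin.succ).BlockTriangular id := by
      intro a b hab
      have hab' : (b : ℕ) < (a : ℕ) := hab
      simp only [Matrix.submatrix_apply, Fin.succAbove_zero]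
      rw [hB, if_neg (by simp only [Fin.ext_iff, Fin.val_succ]; omega),
        if_neg (by simp only [Fin.val_succ]; omega)]
    rw [Matrix.det_of_upperTriangular htri]
    have : ∀ a : Fin (t+1), (B.submatrix (Fin.succAbove 0) Fin.succ) a a = X := by
      intro a
      simp only [Matrix.submatrix_apply, Fin.succAbove_zero]
      rw [hB, if_pos rfl]
    rw [Finset.prod_congr rfl (fun a _ => this a)]
    simp
  have hminorL : B.submatrix (Fin.last (t+1)).succAbove Fin.succ = Cm (t+1) := by
    ext a b : 2
    simp only [Matrix.submatrix_apply, Fin.succAbove_last]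
    rw [hB]
    simp only [Cm, Fin.ext_iff, Fin.val_succ, Fin.coe_castSucc]
    have ha := a.isLt
    have hb := b.isLt
    split_ifs <;> first | rfl | (exfalso; omega)
  have hcol : ∀ i : Fin (t+1), i ≠ Fin.last t → B i.succ 0 = 0 := by
    intro i hi
    rw [hB, if_neg (Fin.succ_ne_zero i), if_neg]
    have : i.val ≠ t := fun h => hi (Fin.ext h)
    simp [Fin.val_succ]; omega
  have key : B.det = X ^ (t+2) - ((1+X)^t - X^t) := by
    rw [Matrix.det_succ_column_zero, Fin.sum_univ_succ]
    rw [Finset.sum_eq_single_of_mem (Fin.last t) (Finset.mem_univ _)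
      (fun i _ hi => by rw [hcol i hi]; ring)]
    have hlast : (Fin.last t).succ = Fin.last (t+1) := rfl
    rw [hlast, hminor0, hminorL, detC]
    have hB00 : B 0 0 = X := by rw [hB, if_pos rfl]
    have hBL0 : B (Fin.last (t+1)) 0 = -1 := by
      rw [hB, if_neg (by simp [Fin.ext_iff]), if_pos (by simp [Fin.last])]
    rw [hB00, hBL0]
    simp only [Fin.val_zero, Fin.val_last, pow_zero, one_mul]
    have hsq : ((-1 : ℤ[X])) ^ (t+1) * (-1)^(t+1) = 1 := by
      rw [← pow_add]
      exact Even.neg_one_pow ⟨t+1, by ring⟩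
    linear_combination (-((1+X)^t - X^t)) * hsq
  rw [Matrix.charpoly, ← hBdef, key]
  congr 1
  have hpow : (1+X : ℤ[X])^t = ∑ m ∈ Finset.range (t+1), X^(t-m) * (t.choose m : ℤ[X]) := by
    rw [add_pow]
    exact Finset.sum_congr rfl (fun m _ => by rw [one_pow, one_mul])
  rw [hpow, Finset.sum_range_succ']
  simp only [Nat.sub_zero, Nat.choose_zero_right, Nat.cast_one, mul_one]
  rw [add_sub_cancel_right]
  refine Finset.sum_nbij' (fun i => i + 1) (fun i => i - 1) ?_ ?_ ?_ ?_ ?_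
  · intro a ha; simp at ha ⊢; omega
  · intro a ha; simp at ha ⊢; omega
  · intro a ha; simp
  · intro a ha; simp at ha ⊢; omega
  · intro a ha
    rw [map_natCast C]
    ring
end

section
/- For the almost transitive tournament T_t and any integer k ≥ 3, the k-th power sum of the eigenvalues of A(T_t), viewed as a function of t, is a polynomial in t of degree exactly k-2 with leading coefficient k/(k-2)!. For k = 2 it is a polynomial in t of degree at most 0. -/
namespace Stmt15

open Matrix Polynomial Finset

def U (t : ℕ) : Matrix (Fin (t+2)) (Fin (t+2)) ℤ := fun i j => if i.val < j.val then 1 else 0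

def i0 (t : ℕ) : Fin (t+2) := ⟨0, by omega⟩
def i1 (t : ℕ) : Fin (t+2) := ⟨t+1, by omega⟩

lemma i0_ne_i1 (t : ℕ) : i0 t ≠ i1 t := by
  simp [i0, i1, Fin.ext_iff]

def Cm (t : ℕ) : Matrix (Fin (t+2)) (Fin (t+2)) ℤ :=
  Matrix.single (i1 t) (i0 t) 1 - Matrix.single (i0 t) (i1 t) 1

lemma A_eq (t : ℕ) : almostTransMat t = U t + Cm t := by
  ext i j
  have hi := i.isLt
  have hj := j.isLt
  simp only [almostTransMat, U, Cm, Matrix.add_apply, Matrix.sub_apply, Matrix.single,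
    Matrix.of_apply, i0, i1, Fin.ext_iff]
  split_ifs <;> omega

lemma Cm_mul_apply (t : ℕ) (N : Matrix (Fin (t+2)) (Fin (t+2)) ℤ) (p q : Fin (t+2)) :
    (Cm t * N) p q = (if p = i1 t then N (i0 t) q else 0) - (if p = i0 t then N (i1 t) q else 0) := by
  rw [Cm, Matrix.sub_mul, Matrix.sub_apply]
  congr 1
  · by_cases h : p = i1 t
    · subst h; simp
    · simp [h, Matrix.single_mul_apply_of_ne _ _ _ _ _ h]
  · by_cases h : p = i0 t
    · subst h; simp
    · simp [h, Matrix.single_mul_apply_of_ne _ _ _ _ _ h]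

lemma UCN_apply (t : ℕ) (i : ℕ) (N : Matrix (Fin (t+2)) (Fin (t+2)) ℤ) (p q : Fin (t+2)) :
    (U t ^ i * (Cm t * N)) p q
      = (U t ^ i) p (i1 t) * N (i0 t) q - (U t ^ i) p (i0 t) * N (i1 t) q := by
  rw [Matrix.mul_apply]
  have : ∀ r : Fin (t+2), (U t ^ i) p r * (Cm t * N) r q
      = (if r = i1 t then (U t ^ i) p r * N (i0 t) q else 0)
        - (if r = i0 t then (U t ^ i) p r * N (i1 t) q else 0) := by
    intro r
    rw [Cm_mul_apply]
    split_ifs <;> ring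
  simp only [this, Finset.sum_sub_distrib, Finset.sum_ite_eq', Finset.mem_univ, if_true]

lemma trace_Cm_mul (t : ℕ) (N : Matrix (Fin (t+2)) (Fin (t+2)) ℤ) :
    Matrix.trace (Cm t * N) = N (i0 t) (i1 t) - N (i1 t) (i0 t) := by
  simp only [Matrix.trace, Matrix.diag]
  have : ∀ r : Fin (t+2), (Cm t * N) r r
      = (if r = i1 t then N (i0 t) r else 0) - (if r = i0 t then N (i1 t) r else 0) := by
    intro r; rw [Cm_mul_apply]
  simp only [this, Finset.sum_sub_distrib, Finset.sum_ite_eq', Finset.mem_univ, if_true]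

lemma hs (k : ℕ) (n : ℕ) :
    (∑ c ∈ Finset.range n, ((c.choose k : ℤ))) = ((n.choose (k+1) : ℕ) : ℤ) := by
  induction n with
  | zero => simp
  | succ n ih =>
    rw [Finset.sum_range_succ, ih]
    push_cast [Nat.choose_succ_succ]
    ring

lemma R1 {R : Type*} [Ring R] (u c : R) (m : ℕ) :
    (u + c) ^ m = u ^ m + ∑ i ∈ Finset.range m, u ^ i * (c * (u + c) ^ (m - 1 - i)) := by
  induction m with
  | zero => simp
  | succ m ih =>
    calc (u + c) ^ (m+1) = u * (u+c)^m + c * (u+c)^m := by rw [pow_succ', add_mul]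
    _ = u * (u ^ m + ∑ i ∈ Finset.range m, u ^ i * (c * (u + c) ^ (m - 1 - i))) + c * (u+c)^m := by
        rw [← ih]
    _ = u ^ (m+1) + (∑ i ∈ Finset.range m, u ^ (i+1) * (c * (u + c) ^ ((m+1) - 1 - (i+1)))
          + u ^ 0 * (c * (u + c) ^ ((m+1) - 1 - 0))) := by
        rw [mul_add, Finset.mul_sum, pow_succ']
        have h2 : ∀ i ∈ Finset.range m, u * (u ^ i * (c * (u + c) ^ (m - 1 - i)))
            = u ^ (i+1) * (c * (u + c) ^ ((m+1) - 1 - (i+1))) := by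
          intro i hi
          have : (m+1) - 1 - (i+1) = m - 1 - i := by omega
          rw [this, ← mul_assoc, ← pow_succ']
        rw [Finset.sum_congr rfl h2]
        simp only [pow_zero, one_mul, Nat.add_sub_cancel, Nat.sub_zero]
        rw [add_assoc]
    _ = u ^ (m+1) + ∑ i ∈ Finset.range (m+1), u ^ i * (c * (u + c) ^ ((m+1) - 1 - i)) := by
        rw [Finset.sum_range_succ']

lemma L1 (t : ℕ) : ∀ i : ℕ, ∀ p q : Fin (t+2), q ≤ p →
    (U t ^ i) p q = if i = 0 ∧ p = q then 1 else 0 := by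
  intro i
  induction i with
  | zero =>
    intro p q hqp
    by_cases h : p = q
    · subst h; simp
    · simp [Matrix.one_apply, h, Ne.symm h]
  | succ i ih =>
    intro p q hqp
    rw [pow_succ', Matrix.mul_apply]
    have hz : ∀ r : Fin (t+2), U t p r * (U t ^ i) r q = 0 := by
      intro r
      by_cases hr : p.val < r.val
      · have : q ≤ r := le_trans hqp (le_of_lt hr)
        rw [ih r q this]
        have : ¬ (i = 0 ∧ r = q) := by
          rintro ⟨-, rfl⟩
          exact absurd hr (by omega)
        rw [if_neg this, mul_zero]
      · have : U t p r = 0 := by simp [U, hr]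
        rw [this, zero_mul]
    rw [Finset.sum_eq_zero fun r _ => hz r]
    simp

lemma L2 (t : ℕ) : ∀ i : ℕ, ∀ q : Fin (t+2), 0 < q.val →
    (U t ^ (i+1)) (i0 t) q = (((q.val - 1).choose i : ℕ) : ℤ) := by
  intro i
  induction i with
  | zero =>
    intro q hq
    rw [zero_add, pow_one]
    simp [U, i0, hq]
  | succ i ih =>
    intro q hq
    rw [pow_succ, Matrix.mul_apply]
    have key : ∀ r : Fin (t+2), (U t ^ (i+1)) (i0 t) r * U t r q
        = if 0 < r.val ∧ r.val < q.val then (((r.val - 1).choose i : ℕ) : ℤ) else 0 := by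
      intro r
      by_cases h1 : 0 < r.val
      · rw [ih r h1]
        by_cases h2 : r.val < q.val
        · rw [if_pos ⟨h1, h2⟩]
          have : U t r q = 1 := by simp [U, h2]
          rw [this, mul_one]
        · rw [if_neg (by tauto)]
          have : U t r q = 0 := by simp [U, h2]
          rw [this, mul_zero]
      · have : r = i0 t := by
          apply Fin.ext; simp only [i0]; omega
        subst this
        rw [L1 t (i+1) (i0 t) (i0 t) le_rfl]
        simp [i0]
    rw [Finset.sum_congr rfl fun r _ => key r]
    rw [Fin.sum_univ_eq_sum_range
      (fun c => if 0 < c ∧ c < q.val then (((c - 1).choose i : ℕ) : ℤ) else 0) (t+2)]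
    rw [← Finset.sum_subset (Finset.range_subset_range.mpr (by omega : q.val ≤ t+2))
      (fun c _ hc => by
        rw [if_neg]
        simp only [Finset.mem_range, not_lt] at hc
        omega)]
    obtain ⟨s, hs'⟩ : ∃ s, q.val = s + 1 := ⟨q.val - 1, by omega⟩
    rw [hs']
    rw [Finset.sum_range_succ'
      (fun c => if 0 < c ∧ c < s + 1 then (((c - 1).choose i : ℕ) : ℤ) else 0) s]
    simp only [Nat.lt_irrefl, and_false, if_neg, Nat.add_sub_cancel, Nat.zero_lt_succ,
      true_and, Nat.succ_sub_one, lt_self_iff_false, false_and, ite_false, add_zero]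
    have heq : ∀ c ∈ Finset.range s, (if c + 1 < s + 1 then ((c.choose i : ℕ) : ℤ) else 0)
        = ((c.choose i : ℕ) : ℤ) := by
      intro c hc
      simp only [Finset.mem_range] at hc
      rw [if_pos (by omega)]
    rw [Finset.sum_congr rfl heq, hs]

noncomputable def Bpoly (i : ℕ) : Polynomial ℚ :=
  if i = 0 then 0 else (((i-1).factorial : ℚ))⁻¹ • descPochhammer ℚ (i-1)

lemma Bpoly_eval (i t : ℕ) (hi : i ≠ 0) : (Bpoly i).eval (t : ℚ) = (t.choose (i-1) : ℚ) := by
  rw [Bpoly, if_neg hi, Polynomial.eval_smul, smul_eq_mul,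
    descPochhammer_eval_eq_descFactorial, Nat.descFactorial_eq_factorial_mul_choose]
  push_cast
  rw [← mul_assoc, inv_mul_cancel₀ (by exact_mod_cast (i-1).factorial_ne_zero), one_mul]

lemma Bpoly_coeff_zero_of_le {i n : ℕ} (h : i ≤ n) : (Bpoly i).coeff n = 0 := by
  by_cases hi : i = 0
  · simp [Bpoly, hi]
  · rw [Bpoly, if_neg hi, Polynomial.coeff_smul]
    rw [Polynomial.coeff_eq_zero_of_natDegree_lt]
    · simp
    · rw [descPochhammer_natDegree]; omega

lemma Bpoly_coeff_top (i : ℕ) (hi : i ≠ 0) : (Bpoly i).coeff (i-1) = (((i-1).factorial : ℚ))⁻¹ := by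
  rw [Bpoly, if_neg hi, Polynomial.coeff_smul]
  have h1 : (descPochhammer ℚ (i-1)).coeff (i-1) = 1 := by
    have h := (monic_descPochhammer ℚ (i-1)).coeff_natDegree
    rwa [descPochhammer_natDegree] at h
  rw [h1, smul_eq_mul, mul_one]

noncomputable def P4 : ℕ → ℕ → Polynomial ℚ × Polynomial ℚ × Polynomial ℚ × Polynomial ℚ
  | 0, j => (Bpoly j, if j = 0 then 1 else 0, 0, if j = 0 then 1 else 0)
  | (m+1), j =>
      (Bpoly (m+1+j) + (∑ i ∈ Finset.range (m+1), Bpoly i * (P4 (m-i) j).1) - (P4 m j).2.1,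
       (P4 m j).1,
       (P4 m j).2.2.2,
       (∑ i ∈ Finset.range (m+1), Bpoly i * (P4 (m-i) j).2.2.2) - (P4 m j).2.2.1)
  termination_by m _ => m
  decreasing_by all_goals omega

noncomputable def Ypoly (m j : ℕ) := (P4 m j).1
noncomputable def Wpoly (m j : ℕ) := (P4 m j).2.1
noncomputable def Xpoly (m j : ℕ) := (P4 m j).2.2.2
noncomputable def Zpoly (m j : ℕ) := (P4 m j).2.2.1

lemma Ypoly_zero (j : ℕ) : Ypoly 0 j = Bpoly j := by rw [Ypoly, P4]
lemma Wpoly_zero (j : ℕ) : Wpoly 0 j = if j = 0 then 1 else 0 := by rw [Wpoly, P4]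
lemma Xpoly_zero (j : ℕ) : Xpoly 0 j = if j = 0 then 1 else 0 := by rw [Xpoly, P4]
lemma Zpoly_zero (j : ℕ) : Zpoly 0 j = 0 := by rw [Zpoly, P4]
lemma Ypoly_succ (m j : ℕ) : Ypoly (m+1) j
    = Bpoly (m+1+j) + (∑ i ∈ Finset.range (m+1), Bpoly i * Ypoly (m-i) j) - Wpoly m j := by
  simp only [Ypoly, Wpoly]; rw [P4]
lemma Wpoly_succ (m j : ℕ) : Wpoly (m+1) j = Ypoly m j := by
  simp only [Ypoly, Wpoly]; rw [P4]
lemma Zpoly_succ (m j : ℕ) : Zpoly (m+1) j = Xpoly m j := by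
  simp only [Zpoly, Xpoly]; rw [P4]
lemma Xpoly_succ (m j : ℕ) : Xpoly (m+1) j
    = (∑ i ∈ Finset.range (m+1), Bpoly i * Xpoly (m-i) j) - Zpoly m j := by
  simp only [Zpoly, Xpoly]; rw [P4]

-- entry helper lemmas
lemma Ui01Q (t i : ℕ) : (((U t ^ i) (i0 t) (i1 t) : ℤ) : ℚ) = (Bpoly i).eval (t : ℚ) := by
  cases i with
  | zero =>
    rw [pow_zero, Matrix.one_apply_ne (i0_ne_i1 t)]
    simp [Bpoly]
  | succ i =>
    rw [L2 t i (i1 t) (by simp [i1])]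
    rw [Bpoly_eval (i+1) t (by omega)]
    simp [i1]

lemma Ui00 (t i : ℕ) : (U t ^ i) (i0 t) (i0 t) = if i = 0 then 1 else 0 := by
  rw [L1 t i (i0 t) (i0 t) le_rfl]; simp
lemma Ui11 (t i : ℕ) : (U t ^ i) (i1 t) (i1 t) = if i = 0 then 1 else 0 := by
  rw [L1 t i (i1 t) (i1 t) le_rfl]; simp
lemma Ui10 (t i : ℕ) : (U t ^ i) (i1 t) (i0 t) = 0 := by
  rw [L1 t i (i1 t) (i0 t) (by simp [i0, i1, Fin.le_def])]
  rw [if_neg (by rintro ⟨-, h⟩; exact (i0_ne_i1 t) h.symm)]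

-- the matrix decomposition identity
lemma Adecomp (t m j : ℕ) :
    almostTransMat t ^ (m+1) * U t ^ j
      = U t ^ (m+1+j) + ∑ i ∈ Finset.range (m+1),
          U t ^ i * (Cm t * (almostTransMat t ^ (m-i) * U t ^ j)) := by
  conv_lhs => rw [A_eq, R1 (U t) (Cm t) (m+1)]
  rw [Matrix.add_mul, Finset.sum_mul, ← pow_add]
  congr 1
  apply Finset.sum_congr rfl
  intro i hi
  simp only [Finset.mem_range] at hi
  have h1 : m + 1 - 1 - i = m - i := by omega
  rw [h1, ← A_eq, mul_assoc, mul_assoc]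

lemma sum_delta0 (m : ℕ) (f : ℕ → ℚ) :
    (∑ i ∈ Finset.range (m+1), (if i = 0 then (1:ℚ) else 0) * f i) = f 0 := by
  rw [Finset.sum_eq_single_of_mem 0 (by simp)]
  · simp
  · intro i _ hi
    simp [hi]

lemma ML (t : ℕ) : ∀ m j : ℕ,
    (((almostTransMat t ^ m * U t ^ j) (i0 t) (i1 t) : ℤ) : ℚ) = (Ypoly m j).eval (t:ℚ)
    ∧ (((almostTransMat t ^ m * U t ^ j) (i1 t) (i1 t) : ℤ) : ℚ) = (Wpoly m j).eval (t:ℚ)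
    ∧ (((almostTransMat t ^ m * U t ^ j) (i1 t) (i0 t) : ℤ) : ℚ) = (Zpoly m j).eval (t:ℚ)
    ∧ (((almostTransMat t ^ m * U t ^ j) (i0 t) (i0 t) : ℤ) : ℚ) = (Xpoly m j).eval (t:ℚ) := by
  intro m
  induction m using Nat.strong_induction_on with
  | _ m IH =>
    cases m with
    | zero =>
      intro j
      simp only [pow_zero, Matrix.one_mul]
      refine ⟨?_, ?_, ?_, ?_⟩
      · rw [Ui01Q, Ypoly_zero]
      · rw [Ui11, Wpoly_zero]
        split_ifs <;> simp
      · rw [Ui10, Zpoly_zero]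
        simp
      · rw [Ui00, Xpoly_zero]
        split_ifs <;> simp
    | succ m =>
      intro j
      have hsum : ∀ p q : Fin (t+2), (almostTransMat t ^ (m+1) * U t ^ j) p q
          = (U t ^ (m+1+j)) p q + ∑ i ∈ Finset.range (m+1),
              ((U t ^ i) p (i1 t) * (almostTransMat t ^ (m-i) * U t ^ j) (i0 t) q
                - (U t ^ i) p (i0 t) * (almostTransMat t ^ (m-i) * U t ^ j) (i1 t) q) := by
        intro p q
        rw [Adecomp, Matrix.add_apply, Matrix.sum_apply]
        congr 1
        exact Finset.sum_congr rfl fun i _ => UCN_apply t i _ p q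
      have IHY : ∀ i : ℕ,
          (((almostTransMat t ^ (m-i) * U t ^ j) (i0 t) (i1 t) : ℤ) : ℚ)
            = (Ypoly (m-i) j).eval (t:ℚ) := fun i => (IH (m-i) (by omega) j).1
      have IHW : ∀ i : ℕ,
          (((almostTransMat t ^ (m-i) * U t ^ j) (i1 t) (i1 t) : ℤ) : ℚ)
            = (Wpoly (m-i) j).eval (t:ℚ) := fun i => (IH (m-i) (by omega) j).2.1
      have IHZ : ∀ i : ℕ,
          (((almostTransMat t ^ (m-i) * U t ^ j) (i1 t) (i0 t) : ℤ) : ℚ)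
            = (Zpoly (m-i) j).eval (t:ℚ) := fun i => (IH (m-i) (by omega) j).2.2.1
      have IHX : ∀ i : ℕ,
          (((almostTransMat t ^ (m-i) * U t ^ j) (i0 t) (i0 t) : ℤ) : ℚ)
            = (Xpoly (m-i) j).eval (t:ℚ) := fun i => (IH (m-i) (by omega) j).2.2.2
      refine ⟨?_, ?_, ?_, ?_⟩
      · -- Y case, p = i0, q = i1
        rw [hsum (i0 t) (i1 t)]
        simp only [Ui00]
        push_cast
        simp only [Ui01Q, IHY, IHW]
        rw [Finset.sum_sub_distrib, sum_delta0 m (fun i => (Wpoly (m-i) j).eval (t:ℚ))]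
        rw [Ypoly_succ]
        simp only [Polynomial.eval_sub, Polynomial.eval_add, Polynomial.eval_finset_sum,
          Polynomial.eval_mul, Nat.sub_zero]
        ring
      · -- W case, p = i1, q = i1
        rw [hsum (i1 t) (i1 t)]
        simp only [Ui11, Ui10]
        push_cast
        simp only [IHY, IHW, zero_mul, sub_zero]
        rw [sum_delta0 m (fun i => (Ypoly (m-i) j).eval (t:ℚ))]
        rw [if_neg (by omega : ¬ m + 1 + j = 0)]
        rw [Wpoly_succ]
        simp
      · -- Z case, p = i1, q = i0
        rw [hsum (i1 t) (i0 t)]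
        simp only [Ui11, Ui10]
        push_cast
        simp only [IHX, IHZ, zero_mul, sub_zero]
        rw [sum_delta0 m (fun i => (Xpoly (m-i) j).eval (t:ℚ))]
        rw [Zpoly_succ]
        simp
      · -- X case, p = i0, q = i0
        rw [hsum (i0 t) (i0 t)]
        simp only [Ui00]
        push_cast
        simp only [Ui01Q, IHX, IHZ]
        rw [Finset.sum_sub_distrib, sum_delta0 m (fun i => (Zpoly (m-i) j).eval (t:ℚ))]
        rw [if_neg (by omega : ¬ m + 1 + j = 0)]
        rw [Xpoly_succ]
        simp only [Polynomial.eval_sub, Polynomial.eval_finset_sum, Polynomial.eval_mul,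
          Nat.sub_zero]
        ring

lemma trace_U_pow (t k : ℕ) (hk : 1 ≤ k) : Matrix.trace (U t ^ k) = 0 := by
  rw [Matrix.trace]
  apply Finset.sum_eq_zero
  intro p _
  rw [Matrix.diag_apply, L1 t k p p le_rfl, if_neg]
  rintro ⟨h0, -⟩
  omega

lemma trace_eq (t k : ℕ) (hk : 1 ≤ k) :
    ((Matrix.trace (almostTransMat t ^ k) : ℤ) : ℚ)
      = ∑ i ∈ Finset.range k, ((Ypoly (k-1-i) i).eval (t:ℚ) - (Zpoly (k-1-i) i).eval (t:ℚ)) := by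
  have h1 : almostTransMat t ^ k
      = U t ^ k + ∑ i ∈ Finset.range k, U t ^ i * (Cm t * (almostTransMat t ^ (k-1-i))) := by
    conv_lhs => rw [A_eq, R1 (U t) (Cm t) k]
    rw [← A_eq]
  rw [h1, Matrix.trace_add, trace_U_pow t k hk, zero_add, Matrix.trace_sum]
  push_cast
  apply Finset.sum_congr rfl
  intro i hi
  rw [Matrix.trace_mul_comm, Matrix.mul_assoc, trace_Cm_mul]
  push_cast
  rw [(ML t (k-1-i) i).1, (ML t (k-1-i) i).2.2.1]

lemma CX : ∀ m : ℕ, ∀ j n : ℕ, 1 ≤ n → m + j ≤ n → (Xpoly m j).coeff n = 0 := by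
  intro m
  induction m using Nat.strong_induction_on with
  | _ m IH =>
    cases m with
    | zero =>
      intro j n hn _
      rw [Xpoly_zero]
      split_ifs
      · exact Polynomial.coeff_one.trans (by simp; omega)
      · simp
    | succ m =>
      intro j n hn hmn
      rw [Xpoly_succ, Polynomial.coeff_sub, Polynomial.finset_sum_coeff]
      have hZ : (Zpoly m j).coeff n = 0 := by
        cases m with
        | zero => rw [Zpoly_zero]; simp
        | succ m' =>
          rw [Zpoly_succ]
          exact IH m' (by omega) j n hn (by omega)
      rw [hZ, sub_zero]
      apply Finset.sum_eq_zero
      intro i hi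
      simp only [Finset.mem_range] at hi
      rw [Polynomial.coeff_mul]
      apply Finset.sum_eq_zero
      rintro ⟨a, b⟩ hab
      rw [Finset.HasAntidiagonal.mem_antidiagonal] at hab
      simp only
      by_cases ha : i ≤ a
      · rw [Bpoly_coeff_zero_of_le ha, zero_mul]
      · push_neg at ha
        by_cases hb : b = 0
        · exfalso; omega
        · by_cases hb2 : (m - i) + j ≤ b
          · rw [IH (m-i) (by omega) j b (by omega) hb2, mul_zero]
          · exfalso; omega

lemma CY : ∀ m : ℕ, ∀ j n : ℕ, 1 ≤ n → m + j ≤ n + 1 →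
    (Ypoly m j).coeff n = (Bpoly (m+j)).coeff n := by
  intro m
  induction m using Nat.strong_induction_on with
  | _ m IH =>
    cases m with
    | zero =>
      intro j n _ _
      rw [Ypoly_zero, Nat.zero_add]
    | succ m =>
      intro j n hn hmn
      rw [Ypoly_succ, Polynomial.coeff_sub, Polynomial.coeff_add, Polynomial.finset_sum_coeff]
      have hW : (Wpoly m j).coeff n = 0 := by
        cases m with
        | zero =>
          rw [Wpoly_zero]
          split_ifs
          · exact Polynomial.coeff_one.trans (by simp; omega)
          · simp
        | succ m' =>
          rw [Wpoly_succ]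
          rw [IH m' (by omega) j n hn (by omega)]
          exact Bpoly_coeff_zero_of_le (by omega)
      have hS : (∑ i ∈ Finset.range (m+1), (Bpoly i * Ypoly (m-i) j).coeff n) = 0 := by
        apply Finset.sum_eq_zero
        intro i hi
        simp only [Finset.mem_range] at hi
        rw [Polynomial.coeff_mul]
        apply Finset.sum_eq_zero
        rintro ⟨a, b⟩ hab
        rw [Finset.HasAntidiagonal.mem_antidiagonal] at hab
        simp only
        by_cases ha : i ≤ a
        · rw [Bpoly_coeff_zero_of_le ha, zero_mul]
        · push_neg at ha
          by_cases hb : b = 0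
          · exfalso; omega
          · by_cases hb2 : (m - i) + j ≤ b + 1
            · by_cases hb3 : (m - i) + j ≤ b
              · rw [IH (m-i) (by omega) j b (by omega) hb2]
                rw [Bpoly_coeff_zero_of_le hb3, mul_zero]
              · exfalso; omega
            · exfalso; omega
      rw [hW, hS, add_zero, sub_zero]

noncomputable def qpoly (k : ℕ) : Polynomial ℚ :=
  ∑ i ∈ Finset.range k, (Ypoly (k-1-i) i - Zpoly (k-1-i) i)

lemma qpoly_eval (k : ℕ) (hk : 1 ≤ k) (t : ℕ) :
    ((Matrix.trace (almostTransMat t ^ k) : ℤ) : ℚ) = (qpoly k).eval (t:ℚ) := by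
  rw [trace_eq t k hk, qpoly, Polynomial.eval_finset_sum]
  exact Finset.sum_congr rfl fun i _ => by rw [Polynomial.eval_sub]

lemma qpoly_coeff_Z (k i n : ℕ) (hik : i < k) (hn : 1 ≤ n) (hkn : k - 2 ≤ n) :
    (Zpoly (k-1-i) i).coeff n = 0 := by
  cases h : k - 1 - i with
  | zero => rw [Zpoly_zero, Polynomial.coeff_zero]
  | succ m' =>
    rw [Zpoly_succ]
    exact CX m' i n hn (by omega)

lemma qpoly_coeff_Y (k i n : ℕ) (hik : i < k) (hn : 1 ≤ n) (hkn : k - 2 ≤ n) :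
    (Ypoly (k-1-i) i).coeff n = (Bpoly (k-1)).coeff n := by
  rw [CY (k-1-i) i n hn (by omega), show k - 1 - i + i = k - 1 from by omega]

lemma qpoly_coeff_high (k n : ℕ) (hk : 2 ≤ k) (hn : k - 2 < n) : (qpoly k).coeff n = 0 := by
  rw [qpoly, Polynomial.finset_sum_coeff]
  apply Finset.sum_eq_zero
  intro i hi
  simp only [Finset.mem_range] at hi
  rw [Polynomial.coeff_sub, qpoly_coeff_Y k i n hi (by omega) (by omega),
    qpoly_coeff_Z k i n hi (by omega) (by omega),
    Bpoly_coeff_zero_of_le (by omega : k - 1 ≤ n)]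
  simp

lemma qpoly_coeff_main (k : ℕ) (hk : 3 ≤ k) :
    (qpoly k).coeff (k-2) = (k : ℚ) * (((k-2).factorial : ℚ))⁻¹ := by
  rw [qpoly, Polynomial.finset_sum_coeff]
  have h : ∀ i ∈ Finset.range k, (Ypoly (k-1-i) i - Zpoly (k-1-i) i).coeff (k-2)
      = (((k-2).factorial : ℚ))⁻¹ := by
    intro i hi
    simp only [Finset.mem_range] at hi
    rw [Polynomial.coeff_sub, qpoly_coeff_Y k i (k-2) hi (by omega) le_rfl,
      qpoly_coeff_Z k i (k-2) hi (by omega) le_rfl, sub_zero]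
    have h2 : (Bpoly (k-1)).coeff (k-1-1) = (((k-1-1).factorial : ℚ))⁻¹ :=
      Bpoly_coeff_top (k-1) (by omega)
    have h3 : k - 1 - 1 = k - 2 := by omega
    rw [h3] at h2
    exact h2
  rw [Finset.sum_congr rfl h, Finset.sum_const, Finset.card_range, nsmul_eq_mul]

end Stmt15


/-- The `k`-th power sum of the eigenvalues of `A(T_t)`, i.e.
`tr(A(T_t)^k)`, viewed as a function of `t`, is a polynomial in `t`; for `k ≥ 3` it
has degree exactly `k-2` with leading coefficient `k/(k-2)!`, and for `k = 2` it has
degree at most `0`. -/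
theorem stmt15 (k : ℕ) (hk : 2 ≤ k) :
    ∃ q : Polynomial ℚ,
      (∀ t : ℕ, ((Matrix.trace ((almostTransMat t) ^ k) : ℤ) : ℚ) = q.eval (t : ℚ)) ∧
      (3 ≤ k → q.natDegree = k - 2 ∧
        q.leadingCoeff = (k : ℚ) / ((k - 2).factorial : ℚ)) ∧
      (k = 2 → q.natDegree = 0) := by
  refine ⟨Stmt15.qpoly k, fun t => Stmt15.qpoly_eval k (by omega) t, ?_, ?_⟩
  · intro hk3
    have hle : (Stmt15.qpoly k).natDegree ≤ k - 2 :=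
      Polynomial.natDegree_le_iff_coeff_eq_zero.mpr fun n hn =>
        Stmt15.qpoly_coeff_high k n hk hn
    have hco : (Stmt15.qpoly k).coeff (k-2) = (k : ℚ) * (((k-2).factorial : ℚ))⁻¹ :=
      Stmt15.qpoly_coeff_main k hk3
    have hne : (Stmt15.qpoly k).coeff (k-2) ≠ 0 := by
      rw [hco]
      apply mul_ne_zero
      · exact_mod_cast (by omega : k ≠ 0)
      · exact inv_ne_zero (by exact_mod_cast (k-2).factorial_ne_zero)
    have hdeg : (Stmt15.qpoly k).natDegree = k - 2 :=
      le_antisymm hle (Polynomial.le_natDegree_of_ne_zero hne)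
    refine ⟨hdeg, ?_⟩
    rw [Polynomial.leadingCoeff, hdeg, hco, div_eq_mul_inv]
  · intro hk2
    subst hk2
    have hle : (Stmt15.qpoly 2).natDegree ≤ 0 :=
      Polynomial.natDegree_le_iff_coeff_eq_zero.mpr fun n hn =>
        Stmt15.qpoly_coeff_high 2 n le_rfl hn
    omega
end

section
/- Let Γ_f = (2^e - 1) disjoint copies of the directed path on f-1 vertices together with one directed path on f-1+2^e vertices. Then the adjacency matrix A of Γ_f satisfies Char_A(x) = x^{2^e f}, and for each k in {0,1,...,e}: 𝟏ᵀA^k𝟏 ≡ 0 mod 2^e if k < f, and 𝟏ᵀA^k𝟏 ≡ f - k - 1 mod 2^e if k ≥ f. -/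
open Polynomial

/-- Adjacency matrix of the digraph `Γ_f`: the disjoint union of `2^e - 1` directed
paths on `f-1` vertices together with one directed path on `f-1+2^e` vertices
(arcs `(i, i+1)` along each path). -/
def gammaMat (e f : ℕ) :
    Matrix ((Fin (2 ^ e - 1) × Fin (f - 1)) ⊕ Fin (f - 1 + 2 ^ e))
      ((Fin (2 ^ e - 1) × Fin (f - 1)) ⊕ Fin (f - 1 + 2 ^ e)) ℤ :=
  fun x y =>
    match x, y with
    | Sum.inl (a, i), Sum.inl (b, j) => if a = b ∧ i.val + 1 = j.val then 1 else 0
    | Sum.inr i, Sum.inr j => if i.val + 1 = j.val then 1 else 0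
    | _, _ => 0

lemma sum_shift {n : ℕ} (m : ℕ) (g : ℕ → ℤ) (hg : n ≤ m → g m = 0) :
    (∑ d : Fin n, if m = d.val then g d.val else 0) = g m := by
  by_cases h : m < n
  · rw [Finset.sum_eq_single (⟨m, h⟩ : Fin n)]
    · simp
    · intro c _ hc
      rw [if_neg]
      intro hh; exact hc (Fin.ext hh.symm)
    · simp
  · rw [hg (le_of_not_gt h)]
    apply Finset.sum_eq_zero
    intro d _
    have := d.isLt
    rw [if_neg]
    omega

lemma gammaMat_pow (e f k : ℕ) (x y : (Fin (2 ^ e - 1) × Fin (f - 1)) ⊕ Fin (f - 1 + 2 ^ e)) :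
    ((gammaMat e f) ^ k) x y =
      match x, y with
      | Sum.inl (a, i), Sum.inl (b, j) => if a = b ∧ i.val + k = j.val then 1 else 0
      | Sum.inr i, Sum.inr j => if i.val + k = j.val then 1 else 0
      | _, _ => 0 := by
  induction k generalizing x y with
  | zero =>
    rcases x with ⟨a, i⟩ | i <;> rcases y with ⟨b, j⟩ | j <;>
      simp [Matrix.one_apply, Prod.ext_iff, Fin.ext_iff, eq_comm, and_comm]
  | succ k ih =>
    rw [pow_succ, Matrix.mul_apply]
    rcases x with ⟨a, i⟩ | i <;> rcases y with ⟨b, j⟩ | j <;>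
        simp only [Fintype.sum_sum_type, ih, gammaMat]
    · -- inl inl
      simp only [mul_zero, zero_mul, Finset.sum_const_zero, add_zero]
      rw [Fintype.sum_prod_type]
      have step1 : ∀ c : Fin (2 ^ e - 1),
          (∑ d : Fin (f - 1), (if a = c ∧ i.val + k = d.val then (1:ℤ) else 0) *
            (if c = b ∧ d.val + 1 = j.val then 1 else 0)) =
          if a = c then
            (∑ d : Fin (f - 1), if i.val + k = d.val then
              (if a = b ∧ d.val + 1 = j.val then (1:ℤ) else 0) else 0) else 0 := by
        intro c
        rcases eq_or_ne a c with rfl | h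
        · rw [if_pos rfl]
          apply Finset.sum_congr rfl
          intro d _
          by_cases h1 : i.val + k = d.val <;> simp [h1]
        · rw [if_neg h]
          apply Finset.sum_eq_zero
          intro d _
          simp [h]
      simp only [step1]
      rw [Finset.sum_ite_eq Finset.univ a
        (fun _ => ∑ d : Fin (f - 1), if i.val + k = d.val then
          (if a = b ∧ d.val + 1 = j.val then (1:ℤ) else 0) else 0)]
      rw [if_pos (Finset.mem_univ a)]
      rw [sum_shift (i.val + k) (fun t => if a = b ∧ t + 1 = j.val then (1:ℤ) else 0)]
      · rw [add_assoc]
      · intro h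
        rw [if_neg]
        rintro ⟨-, h2⟩
        have := j.isLt
        omega
    · -- inl inr
      simp
    · -- inr inl
      simp
    · -- inr inr
      simp only [mul_zero, zero_mul, Finset.sum_const_zero, zero_add]
      have step : ∀ d : Fin (f - 1 + 2 ^ e),
          (if i.val + k = d.val then (1:ℤ) else 0) * (if d.val + 1 = j.val then 1 else 0) =
          if i.val + k = d.val then (if d.val + 1 = j.val then (1:ℤ) else 0) else 0 := by
        intro d
        by_cases h1 : i.val + k = d.val <;> simp [h1]
      simp only [step]
      rw [sum_shift (i.val + k) (fun t => if t + 1 = j.val then (1:ℤ) else 0)]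
      · rw [add_assoc]
      · intro h
        rw [if_neg]
        have := j.isLt
        omega

lemma path_sum (n k : ℕ) :
    (∑ i : Fin n, ∑ j : Fin n, (if i.val + k = j.val then (1 : ℤ) else 0)) = ((n - k : ℕ) : ℤ) := by
  have h1 : ∀ i : Fin n, (∑ j : Fin n, (if i.val + k = j.val then (1 : ℤ) else 0)) =
      if i.val + k < n then 1 else 0 := by
    intro i
    have hpt : ∀ d : Fin n, (if i.val + k = d.val then (1:ℤ) else 0) =
        if i.val + k = d.val then (if d.val < n then (1:ℤ) else 0) else 0 := by
      intro d
      simp [d.isLt]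
    simp only [hpt]
    exact sum_shift (i.val + k) (fun t => if t < n then (1:ℤ) else 0)
      (fun h => if_neg (by omega))
  simp only [h1]
  rw [Fin.sum_univ_eq_sum_range (fun i => if i + k < n then (1 : ℤ) else 0)]
  rw [Finset.sum_boole]
  have : (Finset.range n).filter (fun i => i + k < n) = Finset.range (n - k) := by
    ext i; simp; omega
  rw [this, Finset.card_range]

/-- `Γ_f` has characteristic polynomial `x^{2^e·f}`, and for
`0 ≤ k ≤ e`, `𝟏ᵀA(Γ_f)^k𝟏 ≡ 0 (mod 2^e)` if `k < f` and
`𝟏ᵀA(Γ_f)^k𝟏 ≡ f - k - 1 (mod 2^e)` if `k ≥ f`. -/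
theorem stmt16 (e f : ℕ) (hf : 1 ≤ f) (hfe : f ≤ e) :
    (gammaMat e f).charpoly = X ^ (2 ^ e * f) ∧
    ∀ k : ℕ, k ≤ e →
      (∑ u, ∑ v, ((gammaMat e f) ^ k) u v) ≡
        (if k < f then 0 else (f : ℤ) - (k : ℤ) - 1) [ZMOD (2 ^ e : ℤ)] := by
  have hp : 1 ≤ 2 ^ e := Nat.one_le_two_pow
  have hcard : Fintype.card ((Fin (2 ^ e - 1) × Fin (f - 1)) ⊕ Fin (f - 1 + 2 ^ e)) = 2 ^ e * f := by
    simp only [Fintype.card_sum, Fintype.card_prod, Fintype.card_fin]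
    revert hp
    generalize 2 ^ e = q
    intro hq
    obtain ⟨p, rfl⟩ : ∃ p, q = p + 1 := ⟨q - 1, by omega⟩
    obtain ⟨g, rfl⟩ : ∃ g, f = g + 1 := ⟨f - 1, by omega⟩
    simp only [Nat.add_sub_cancel]
    ring
  have hsum : ∀ k, (∑ u, ∑ v, ((gammaMat e f) ^ k) u v) =
      ((2 ^ e - 1 : ℕ) : ℤ) * ((f - 1 - k : ℕ) : ℤ) + ((f - 1 + 2 ^ e - k : ℕ) : ℤ) := by
    intro k
    rw [Fintype.sum_sum_type]
    have e1 : (∑ x : Fin (2 ^ e - 1) × Fin (f - 1), ∑ v, ((gammaMat e f) ^ k) (Sum.inl x) v) =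
        ((2 ^ e - 1 : ℕ) : ℤ) * ((f - 1 - k : ℕ) : ℤ) := by
      have inner : ∀ x : Fin (2 ^ e - 1) × Fin (f - 1),
          (∑ v, ((gammaMat e f) ^ k) (Sum.inl x) v) =
            ∑ j : Fin (f - 1), (if x.2.val + k = j.val then (1:ℤ) else 0) := by
        intro x
        rw [Fintype.sum_sum_type]
        rcases x with ⟨a, i⟩
        simp only [gammaMat_pow]
        rw [Finset.sum_const_zero, add_zero, Fintype.sum_prod_type]
        have hpt : ∀ b : Fin (2 ^ e - 1),
            (∑ j : Fin (f - 1), if a = b ∧ i.val + k = j.val then (1:ℤ) else 0) =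
            if a = b then (∑ j : Fin (f - 1), if i.val + k = j.val then (1:ℤ) else 0) else 0 := by
          intro b
          rcases eq_or_ne a b with rfl | h
          · simp
          · simp [h]
        simp only [hpt]
        rw [Finset.sum_ite_eq Finset.univ a, if_pos (Finset.mem_univ a)]
      simp only [inner]
      rw [Fintype.sum_prod_type]
      simp only [path_sum]
      rw [Finset.sum_const]
      simp [Finset.card_univ, mul_comm]
    have e2 : (∑ i : Fin (f - 1 + 2 ^ e), ∑ v, ((gammaMat e f) ^ k) (Sum.inr i) v) =
        ((f - 1 + 2 ^ e - k : ℕ) : ℤ) := by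
      have inner : ∀ i : Fin (f - 1 + 2 ^ e),
          (∑ v, ((gammaMat e f) ^ k) (Sum.inr i) v) =
            ∑ j : Fin (f - 1 + 2 ^ e), (if i.val + k = j.val then (1:ℤ) else 0) := by
        intro i
        rw [Fintype.sum_sum_type]
        simp only [gammaMat_pow]
        rw [Finset.sum_const_zero, zero_add]
      simp only [inner]
      exact path_sum _ k
    rw [e1, e2]
  have hnil : IsNilpotent (gammaMat e f) := by
    refine ⟨f - 1 + 2 ^ e, ?_⟩
    ext x y
    rw [gammaMat_pow]
    rcases x with ⟨a, i⟩ | i <;> rcases y with ⟨b, j⟩ | j <;> simp [Matrix.zero_apply]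
    · rintro rfl; have := j.isLt; omega
    · have := j.isLt; omega
  constructor
  · have h2 := Matrix.isNilpotent_charpoly_sub_pow_of_isNilpotent hnil
    have h3 : (gammaMat e f).charpoly - X ^ (Fintype.card _) = 0 := h2.eq_zero
    rw [sub_eq_zero] at h3
    rw [h3, hcard]
  · intro k hk
    rw [hsum k]
    have hcast : ((2 ^ e - 1 : ℕ) : ℤ) = 2 ^ e - 1 := by
      push_cast [hp]
      ring
    by_cases hkf : k < f
    · simp only [hkf, if_true]
      have h2 : (f - 1 + 2 ^ e - k : ℕ) = (f - 1 - k) + 2 ^ e := by omega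
      rw [h2, hcast]
      push_cast
      refine Int.modEq_zero_iff_dvd.mpr ⟨((f - 1 - k : ℕ) : ℤ) + 1, by ring⟩
    · simp only [hkf, if_false]
      push_neg at hkf
      have hke : k < 2 ^ e := lt_of_le_of_lt hk (Nat.lt_two_pow_self (n := e))
      have h1 : (f - 1 - k : ℕ) = 0 := by omega
      have h2 : ((f - 1 + 2 ^ e - k : ℕ) : ℤ) = (f : ℤ) - k - 1 + 2 ^ e := by
        have h3 : (f - 1 + 2 ^ e - k : ℕ) + k + 1 = f + 2 ^ e := by omega
        have h4 := congrArg (fun n : ℕ => (n : ℤ)) h3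
        push_cast at h4
        linarith
      rw [h1, h2]
      simp only [Nat.cast_zero, mul_zero, zero_add]
      calc (f : ℤ) - k - 1 + 2 ^ e ≡ (f : ℤ) - k - 1 + 0 [ZMOD (2 ^ e : ℤ)] :=
            Int.ModEq.add_left _ (Int.modEq_zero_iff_dvd.mpr dvd_rfl)
        _ = (f : ℤ) - k - 1 := by ring
end

section
/- For every e ∈ ℕ there exists N such that for all n > N and every tuple (a₂,...,a_e) of integers with 2^{i-1} dividing a_i for each i, there exists an n×n {±1}-matrix M with all diagonal entries equal to 1 whose characteristic polynomial det(xI-M) = Σ b_i x^{n-i} satisfies b_i ≡ a_i mod 2^e for all i in {2,...,e}. -/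
namespace Stmt17Aux
open Finset

/-- positions covered by runs of given lengths, separated by single gaps -/
def runSet : List ℕ → Finset ℕ
  | [] => ∅
  | ℓ :: L => Finset.range ℓ ∪ (runSet L).image (· + (ℓ + 1))

/-- number of windows of width `j` fully inside `S` -/
def winCard (S : Finset ℕ) (j : ℕ) : ℕ :=
  (S.filter (fun i => ∀ t < j, i + t ∈ S)).card

lemma mem_runSet_cons {ℓ : ℕ} {L : List ℕ} {p : ℕ} :
    p ∈ runSet (ℓ :: L) ↔ p < ℓ ∨ ∃ q ∈ runSet L, p = q + (ℓ + 1) := by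
  simp [runSet, eq_comm]

lemma runSet_lt : ∀ (L : List ℕ), ∀ p ∈ runSet L, p < (L.map (· + 1)).sum := by
  intro L
  induction L with
  | nil => simp [runSet]
  | cons ℓ L ih =>
    intro p hp
    rcases mem_runSet_cons.mp hp with h | ⟨q, hq, rfl⟩
    · simp only [List.map_cons, List.sum_cons]; omega
    · have := ih q hq
      simp only [List.map_cons, List.sum_cons]; omega

lemma winCard_cons (ℓ : ℕ) (L : List ℕ) (j : ℕ) (hj : 1 ≤ j) :
    winCard (runSet (ℓ :: L)) j = (ℓ + 1 - j) + winCard (runSet L) j := by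
  classical
  have hgap : ℓ ∉ runSet (ℓ :: L) := by
    rw [mem_runSet_cons]
    rintro (h | ⟨q, hq, h⟩) <;> omega
  have hsplit : (runSet (ℓ :: L)).filter (fun i => ∀ t < j, i + t ∈ runSet (ℓ :: L))
      = Finset.range (ℓ + 1 - j) ∪
        ((runSet L).filter (fun i => ∀ t < j, i + t ∈ runSet L)).image (· + (ℓ + 1)) := by
    ext i
    simp only [Finset.mem_filter, Finset.mem_union, Finset.mem_range, Finset.mem_image]
    constructor
    · rintro ⟨hi, hw⟩
      by_cases hiℓ : i < ℓ
      · left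
        by_contra hcon
        have ht : ℓ - i < j := by omega
        have := hw (ℓ - i) ht
        rw [show i + (ℓ - i) = ℓ by omega] at this
        exact hgap this
      · right
        rcases mem_runSet_cons.mp hi with h | ⟨q, hq, rfl⟩
        · omega
        refine ⟨q, ⟨hq, ?_⟩, rfl⟩
        intro t ht
        have := hw t ht
        rcases mem_runSet_cons.mp this with h | ⟨q', hq', h⟩
        · omega
        · have : q' = q + t := by omega
          subst this; exact hq'
    · rintro (hi | ⟨q, ⟨hq, hw⟩, rfl⟩)
      · have hij : i + j ≤ ℓ := by omega
        refine ⟨mem_runSet_cons.mpr (Or.inl (by omega)), ?_⟩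
        intro t ht
        exact mem_runSet_cons.mpr (Or.inl (by omega))
      · refine ⟨mem_runSet_cons.mpr (Or.inr ⟨q, hq, rfl⟩), ?_⟩
        intro t ht
        exact mem_runSet_cons.mpr
          (Or.inr ⟨q + t, hw t ht, by omega⟩)
  have hdisj : Disjoint (Finset.range (ℓ + 1 - j))
      (((runSet L).filter (fun i => ∀ t < j, i + t ∈ runSet L)).image (· + (ℓ + 1))) := by
    rw [Finset.disjoint_left]
    intro p hp hp'
    simp only [Finset.mem_range] at hp
    simp only [Finset.mem_image] at hp'
    obtain ⟨q, _, rfl⟩ := hp'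
    omega
  rw [winCard, hsplit, Finset.card_union_of_disjoint hdisj, Finset.card_range,
    Finset.card_image_of_injective _ (add_left_injective (ℓ + 1))]
  rfl

lemma winCard_runSet (L : List ℕ) (j : ℕ) (hj : 1 ≤ j) :
    winCard (runSet L) j = (L.map (fun ℓ => ℓ + 1 - j)).sum := by
  induction L with
  | nil => simp [winCard, runSet]; exact Finset.filter_empty _
  | cons ℓ L ih => rw [winCard_cons ℓ L j hj, ih]; simp

lemma exists_runs (e : ℕ) : ∀ (d : ℕ), d ≤ e → ∀ (r : ℕ → ℤ), ∃ L : List ℕ,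
    (∀ ℓ ∈ L, 1 ≤ ℓ ∧ ℓ ≤ d) ∧ L.length ≤ d * 2 ^ e ∧
    ∀ j, 1 ≤ j → j ≤ d →
      ((L.map (fun ℓ => ℓ + 1 - j)).sum : ℤ) ≡ r j [ZMOD (2 : ℤ) ^ (e - j)] := by
  intro d
  induction d with
  | zero => intro _ r; exact ⟨[], by simp, by simp, fun j h1 h2 => by omega⟩
  | succ d ih =>
    intro hde r
    set m : ℤ := 2 ^ (e - (d + 1)) with hm
    have hmpos : 0 < m := by positivity
    set c : ℕ := (r (d + 1) % m).toNat with hc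
    have hcZ : (c : ℤ) = r (d + 1) % m :=
      Int.toNat_of_nonneg (Int.emod_nonneg _ (ne_of_gt hmpos))
    have hcmod : (c : ℤ) ≡ r (d + 1) [ZMOD m] := by
      rw [hcZ]; exact Int.mod_modEq _ _
    have hcle : c ≤ 2 ^ e := by
      have h1 : (c : ℤ) < m := by
        rw [hcZ]; exact Int.emod_lt_of_pos _ hmpos
      have h2 : m ≤ 2 ^ e := by
        rw [hm]
        exact pow_le_pow_right₀ (by norm_num) (by omega)
      have : (c : ℤ) ≤ (2 : ℤ) ^ e := by omega
      exact_mod_cast this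
    obtain ⟨L', hL'1, hL'len, hL'cong⟩ :=
      ih (by omega) (fun j => r j - (c : ℤ) * ((d + 2 - j : ℕ) : ℤ))
    refine ⟨List.replicate c (d + 1) ++ L', ?_, ?_, ?_⟩
    · intro ℓ hℓ
      rcases List.mem_append.mp hℓ with h | h
      · rw [List.eq_of_mem_replicate h]; omega
      · have := hL'1 ℓ h; omega
    · rw [List.length_append, List.length_replicate]
      have := hL'len
      calc c + L'.length ≤ 2 ^ e + d * 2 ^ e := by omega
        _ = (d + 1) * 2 ^ e := by ring
    · intro j hj1 hj2
      have hrep : ((List.replicate c (d + 1)).map (fun ℓ => ℓ + 1 - j)).sum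
          = c * (d + 2 - j) := by
        rw [List.map_replicate, List.sum_replicate, smul_eq_mul]
      rw [List.map_append, List.sum_append, hrep]
      have hA : ((c * (d + 2 - j) + (L'.map (fun ℓ => ℓ + 1 - j)).sum : ℕ) : ℤ)
          = (c : ℤ) * ((d + 2 - j : ℕ) : ℤ) + ((L'.map (fun ℓ => ℓ + 1 - j)).sum : ℤ) := by
        push_cast
        ring
      rw [hA]
      by_cases hjd : j = d + 1
      · subst hjd
        have hzero : (L'.map (fun ℓ => ℓ + 1 - (d + 1))).sum = 0 := by
          apply List.sum_eq_zero
          intro x hx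
          obtain ⟨ℓ, hℓ, rfl⟩ := List.mem_map.mp hx
          have := hL'1 ℓ hℓ
          omega
        have hone : ((d + 2 - (d + 1) : ℕ) : ℤ) = 1 := by norm_num
        rw [hzero, Nat.cast_zero, add_zero, hone, mul_one]
        exact hcmod
      · have hstep := (hL'cong j hj1 (by omega)).add_left
          ((c : ℤ) * ((d + 2 - j : ℕ) : ℤ))
        have h3 : (c : ℤ) * ((d + 2 - j : ℕ) : ℤ) +
            (r j - (c : ℤ) * ((d + 2 - j : ℕ) : ℤ)) = r j := by ring
        rwa [h3] at hstep



open Finset Matrix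

/-- adjacency matrix of edges i → i+1 for i ∈ S -/
def eMat (n : ℕ) (S : Finset ℕ) : Matrix (Fin n) (Fin n) ℤ :=
  Matrix.of fun i j => if (j : ℕ) = (i : ℕ) + 1 ∧ (i : ℕ) ∈ S then 1 else 0

/-- the ±1 matrix J - 2E -/
def mMat (n : ℕ) (S : Finset ℕ) : Matrix (Fin n) (Fin n) ℤ :=
  Matrix.of fun i j => if (j : ℕ) = (i : ℕ) + 1 ∧ (i : ℕ) ∈ S then -1 else 1

lemma eMat_pow (n : ℕ) (S : Finset ℕ) : ∀ (k : ℕ) (i j : Fin n),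
    (eMat n S ^ k) i j =
      if (j : ℕ) = (i : ℕ) + k ∧ ∀ t < k, (i : ℕ) + t ∈ S then 1 else 0 := by
  intro k
  induction k with
  | zero =>
    intro i j
    rw [pow_zero, Matrix.one_apply]
    by_cases h : i = j
    · subst h; simp
    · rw [if_neg h, if_neg]
      rintro ⟨h1, -⟩
      exact h (Fin.ext (by omega))
  | succ k ih =>
    intro i j
    rw [pow_succ, Matrix.mul_apply]
    by_cases hn : (i : ℕ) + k < n
    · have huniv : (⟨(i : ℕ) + k, hn⟩ : Fin n) ∈ Finset.univ := Finset.mem_univ _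
      rw [Finset.sum_eq_single (⟨(i : ℕ) + k, hn⟩ : Fin n)]
      · have hval : (eMat n S ^ k) i ⟨(i : ℕ) + k, hn⟩
            = if (∀ t < k, (i : ℕ) + t ∈ S) then 1 else 0 := by
          rw [ih]
          by_cases hw : ∀ t < k, (i : ℕ) + t ∈ S
          · rw [if_pos ⟨rfl, hw⟩, if_pos hw]
          · rw [if_neg (fun h => hw h.2), if_neg hw]
        have hval2 : eMat n S ⟨(i : ℕ) + k, hn⟩ j
            = if ((j : ℕ) = (i : ℕ) + k + 1 ∧ (i : ℕ) + k ∈ S) then 1 else 0 := rfl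
        rw [hval, hval2]
        by_cases hw : ∀ t < k, (i : ℕ) + t ∈ S
        · rw [if_pos hw, one_mul]
          by_cases hs : (j : ℕ) = (i : ℕ) + k + 1 ∧ (i : ℕ) + k ∈ S
          · have hC : (j : ℕ) = (i : ℕ) + (k + 1) ∧ ∀ t < k + 1, (i : ℕ) + t ∈ S := by
              refine ⟨by have := hs.1; omega, fun t ht => ?_⟩
              rcases Nat.lt_succ_iff_lt_or_eq.mp ht with h | h
              · exact hw t h
              · subst h; exact hs.2
            rw [if_pos hs, if_pos hC]
          · have hC : ¬((j : ℕ) = (i : ℕ) + (k + 1) ∧ ∀ t < k + 1, (i : ℕ) + t ∈ S) := by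
              rintro ⟨hc1, hc2⟩
              exact hs ⟨by omega, hc2 k (by omega)⟩
            rw [if_neg hs, if_neg hC]
        · rw [if_neg hw, zero_mul, if_neg]
          rintro ⟨-, hc2⟩
          exact hw (fun t ht => hc2 t (by omega))
      · intro l _ hne
        rw [ih, if_neg, zero_mul]
        rintro ⟨h1, -⟩
        exact hne (Fin.ext (by simpa using h1))
      · intro h
        exact absurd huniv h
    · rw [Finset.sum_eq_zero, if_neg]
      · rintro ⟨h1, -⟩
        have := j.isLt
        omega
      · intro l _
        rw [ih, if_neg, zero_mul]
        rintro ⟨h1, -⟩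
        have := l.isLt
        omega

lemma eMat_pow_n (n : ℕ) (S : Finset ℕ) : eMat n S ^ n = 0 := by
  ext i j
  rw [eMat_pow, if_neg]
  · rfl
  · rintro ⟨h1, -⟩
    have := j.isLt
    have := i.isLt
    omega

lemma csum_eq (n : ℕ) (S : Finset ℕ) (k : ℕ) (hk : 1 ≤ k)
    (hS : ∀ p ∈ S, p + k < n) :
    (∑ i : Fin n, ∑ j : Fin n, (eMat n S ^ k) i j) = (winCard S k : ℤ) := by
  classical
  have hinner : ∀ i : Fin n,
      (∑ j : Fin n, (eMat n S ^ k) i j)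
        = if (∀ t < k, (i : ℕ) + t ∈ S) then 1 else 0 := by
    intro i
    by_cases hw : ∀ t < k, (i : ℕ) + t ∈ S
    · have hn : (i : ℕ) + k < n := by
        have h0 : (i : ℕ) + 0 ∈ S := hw 0 (by omega)
        have := hS _ h0
        omega
      rw [if_pos hw, Finset.sum_eq_single (⟨(i : ℕ) + k, hn⟩ : Fin n)]
      · rw [eMat_pow, if_pos ⟨rfl, hw⟩]
      · intro l _ hne
        rw [eMat_pow, if_neg]
        rintro ⟨h1, -⟩
        exact hne (Fin.ext (by simpa using h1))
      · intro h
        exact absurd (Finset.mem_univ _) h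
    · rw [if_neg hw, Finset.sum_eq_zero]
      intro l _
      rw [eMat_pow, if_neg]
      rintro ⟨-, h2⟩
      exact hw h2
  rw [Finset.sum_congr rfl (fun i _ => hinner i), Finset.sum_boole]
  congr 1
  rw [winCard]
  refine Finset.card_bij' (fun i _ => (i : ℕ))
      (fun p hp => (⟨p, by have := hS p (Finset.mem_filter.mp hp).1; omega⟩ : Fin n))
      ?_ ?_ ?_ ?_
  · intro i hi
    simp only [Finset.mem_filter, Finset.mem_univ, true_and] at hi
    refine Finset.mem_filter.mpr ⟨?_, hi⟩
    have := hi 0 (by omega)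
    simpa using this
  · intro p hp
    simp only [Finset.mem_filter] at hp
    refine Finset.mem_filter.mpr ⟨Finset.mem_univ _, ?_⟩
    exact hp.2
  · intro i hi
    rfl
  · intro p hp
    rfl


open Finset Matrix Polynomial




set_option maxHeartbeats 1600000 in
set_option synthInstance.maxHeartbeats 400000 in
lemma charpoly_mMat (n : ℕ) (S : Finset ℕ) (hn : 1 ≤ n) :
    (mMat n S).charpoly =
      Polynomial.X ^ n - ∑ k ∈ Finset.range n,
        Polynomial.C ((-2 : ℤ) ^ k * ∑ i : Fin n, ∑ j : Fin n, (eMat n S ^ k) i j)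
          * Polynomial.X ^ (n - 1 - k) := by
  classical
  set φ : Polynomial ℤ →+* RatFunc ℚ :=
    (algebraMap (Polynomial ℚ) (RatFunc ℚ)).comp
      (Polynomial.mapRingHom (Int.castRingHom ℚ)) with hφdef
  have hφinj : Function.Injective φ :=
    (IsFractionRing.injective (Polynomial ℚ) (RatFunc ℚ)).comp
      (Polynomial.map_injective _ Int.cast_injective)
  set x : RatFunc ℚ := φ Polynomial.X with hxdef
  have hx : x ≠ 0 := by
    intro h
    exact Polynomial.X_ne_zero (R := ℤ) (hφinj (by rw [map_zero]; exact h))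
  set y : RatFunc ℚ := x⁻¹ with hydef
  have hxy : x * y = 1 := mul_inv_cancel₀ hx
  set ε : Matrix (Fin n) (Fin n) (RatFunc ℚ) :=
    (Int.castRingHom (RatFunc ℚ)).mapMatrix (eMat n S) with hεdef
  have hεpow : ∀ k : ℕ, ε ^ k = (Int.castRingHom (RatFunc ℚ)).mapMatrix (eMat n S ^ k) :=
    fun k => (map_pow ((Int.castRingHom (RatFunc ℚ)).mapMatrix) (eMat n S) k).symm
  have hεn : ε ^ n = 0 := by rw [hεpow, eMat_pow_n, map_zero]
  have hε_apply : ∀ i j : Fin n, ε i j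
      = ((if (j : ℕ) = (i : ℕ) + 1 ∧ (i : ℕ) ∈ S then (1 : ℤ) else 0 : ℤ) : RatFunc ℚ) :=
    fun i j => rfl
  set A : Matrix (Fin n) (Fin n) (RatFunc ℚ) :=
    x • (1 : Matrix (Fin n) (Fin n) (RatFunc ℚ)) + (2 : RatFunc ℚ) • ε with hAdef
  -- telescoping product
  have hAmul : ∀ k : ℕ, A * (((-2 : RatFunc ℚ) ^ k * y ^ (k + 1)) • ε ^ k)
      = ((-2 : RatFunc ℚ) ^ k * y ^ k) • ε ^ k
        - ((-2 : RatFunc ℚ) ^ (k + 1) * y ^ (k + 1)) • ε ^ (k + 1) := by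
    intro k
    have h1 : A * ε ^ k = x • ε ^ k + (2 : RatFunc ℚ) • ε ^ (k + 1) := by
      rw [hAdef, add_mul, smul_mul_assoc, one_mul, smul_mul_assoc, ← pow_succ']
    have hyx : y ^ (k + 1) * x = y ^ k := by
      rw [pow_succ, mul_assoc, mul_comm y x, hxy, mul_one]
    have hc1 : (-2 : RatFunc ℚ) ^ k * y ^ (k + 1) * x = (-2 : RatFunc ℚ) ^ k * y ^ k := by
      rw [mul_assoc, hyx]
    have hc2 : (-2 : RatFunc ℚ) ^ k * y ^ (k + 1) * 2
        = -((-2 : RatFunc ℚ) ^ (k + 1) * y ^ (k + 1)) := by ring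
    rw [Matrix.mul_smul, h1, smul_add, smul_smul, smul_smul, hc1, hc2, neg_smul,
      ← sub_eq_add_neg]
  set Binv : Matrix (Fin n) (Fin n) (RatFunc ℚ) :=
    ∑ k ∈ Finset.range n, ((-2 : RatFunc ℚ) ^ k * y ^ (k + 1)) • ε ^ k with hBdef
  have hAB : A * Binv = 1 := by
    rw [hBdef, Finset.mul_sum, Finset.sum_congr rfl (fun k _ => hAmul k),
      Finset.sum_range_sub' (fun k => ((-2 : RatFunc ℚ) ^ k * y ^ k) • ε ^ k)]
    simp [hεn]
  -- the all-ones matrix as col * row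
  set CM : Matrix (Fin n) (Fin n) (RatFunc ℚ) :=
    Matrix.replicateCol (Fin 1) (fun _ => (1 : RatFunc ℚ))
      * Matrix.replicateRow (Fin 1) (fun _ => (1 : RatFunc ℚ)) with hCMdef
  have hCM : ∀ i j : Fin n, CM i j = 1 := by
    intro i j
    rw [hCMdef]
    simp [Matrix.mul_apply]
  have hCmap : ∀ z : ℤ, φ (Polynomial.C z) = (z : RatFunc ℚ) := by
    intro z
    rw [← RingHom.comp_apply]
    exact eq_intCast (φ.comp Polynomial.C) z
  -- the mapped charmatrix
  have hchar : (charmatrix (mMat n S)).map φ = A - CM := by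
    ext i j
    have hrhs : (A - CM) i j
        = x * (if i = j then 1 else 0)
          + 2 * ((if (j : ℕ) = (i : ℕ) + 1 ∧ (i : ℕ) ∈ S then (1 : ℤ) else 0 : ℤ) : RatFunc ℚ)
          - 1 := by
      rw [Matrix.sub_apply, hAdef, Matrix.add_apply, Matrix.smul_apply, Matrix.smul_apply, hCM,
        hε_apply, smul_eq_mul, smul_eq_mul, Matrix.one_apply]
    rw [Matrix.map_apply, hrhs]
    by_cases h : i = j
    · subst h
      have hm1 : mMat n S i i = 1 := if_neg (by rintro ⟨h1, -⟩; omega)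
      rw [charmatrix_apply_eq, map_sub, hCmap, hm1, if_pos rfl,
        if_neg (by rintro ⟨h1, -⟩; omega), ← hxdef]
      push_cast
      ring
    · rw [charmatrix_apply_ne _ _ _ h, map_neg, hCmap, if_neg h]
      have hmm : mMat n S i j
          = if (j : ℕ) = (i : ℕ) + 1 ∧ (i : ℕ) ∈ S then (-1 : ℤ) else 1 := rfl
      rw [hmm]
      by_cases hc : (j : ℕ) = (i : ℕ) + 1 ∧ (i : ℕ) ∈ S
      · rw [if_pos hc, if_pos hc]
        push_cast
        ring
      · rw [if_neg hc, if_neg hc]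
        push_cast
        ring
  -- determinant of A
  have hdetA : A.det = x ^ n := by
    have htri : A.BlockTriangular id := by
      intro i j hij
      have hij' : (j : ℕ) < (i : ℕ) := hij
      rw [hAdef, Matrix.add_apply, Matrix.smul_apply, Matrix.smul_apply,
        Matrix.one_apply_ne (by intro h; rw [h] at hij'; omega), hε_apply,
        if_neg (by rintro ⟨h1, -⟩; omega)]
      simp
    rw [Matrix.det_of_upperTriangular htri]
    have hdiag : ∀ i : Fin n, A i i = x := by
      intro i
      rw [hAdef, Matrix.add_apply, Matrix.smul_apply, Matrix.smul_apply, Matrix.one_apply_eq,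
        hε_apply, if_neg (by rintro ⟨h1, -⟩; omega)]
      simp
    rw [Finset.prod_congr rfl (fun i _ => hdiag i), Finset.prod_const, Finset.card_univ,
      Fintype.card_fin]
  -- factor
  have hfact : A - CM = A * (1 - Binv * CM) := by
    rw [Matrix.mul_sub, Matrix.mul_one, ← Matrix.mul_assoc, hAB, Matrix.one_mul]
  -- determinant of the rank-one part
  set w : Fin n → RatFunc ℚ := Binv *ᵥ (fun _ => (1 : RatFunc ℚ)) with hwdef
  have hBC : Binv * CM
      = Matrix.replicateCol (Fin 1) w * Matrix.replicateRow (Fin 1) (fun _ => (1 : RatFunc ℚ)) := by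
    rw [hCMdef, ← Matrix.mul_assoc, hwdef, Matrix.replicateCol_mulVec]
  have hneg : (1 : Matrix (Fin n) (Fin n) (RatFunc ℚ))
        - Matrix.replicateCol (Fin 1) w * Matrix.replicateRow (Fin 1) (fun _ => (1 : RatFunc ℚ))
      = 1 + Matrix.replicateCol (Fin 1) (-w) * Matrix.replicateRow (Fin 1) (fun _ => (1 : RatFunc ℚ)) := by
    rw [sub_eq_add_neg]
    congr 1
    ext i j
    simp [Matrix.mul_apply]
  have hdet1 : (1 - Binv * CM).det = 1 - ∑ i : Fin n, w i := by
    rw [hBC, hneg]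
    refine (Matrix.det_one_add_replicateCol_mul_replicateRow (ι := Fin 1) (-w) (fun _ => 1)).trans ?_
    simp [dotProduct, sub_eq_add_neg]
  -- sum of entries of Binv
  have hsumw : ∑ i : Fin n, w i
      = ∑ k ∈ Finset.range n, ((-2 : RatFunc ℚ) ^ k * y ^ (k + 1))
          * ((∑ i : Fin n, ∑ j : Fin n, (eMat n S ^ k) i j : ℤ) : RatFunc ℚ) := by
    have h1 : ∀ i : Fin n, w i = ∑ j : Fin n, Binv i j := by
      intro i
      rw [hwdef, Matrix.mulVec]
      simp [dotProduct]
    have h2 : ∀ i j : Fin n, Binv i j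
        = ∑ k ∈ Finset.range n, ((-2 : RatFunc ℚ) ^ k * y ^ (k + 1))
            * (((eMat n S ^ k) i j : ℤ) : RatFunc ℚ) := by
      intro i j
      rw [hBdef, Matrix.sum_apply]
      refine Finset.sum_congr rfl (fun k _ => ?_)
      rw [Matrix.smul_apply, smul_eq_mul, hεpow]
      rfl
    calc ∑ i : Fin n, w i
        = ∑ i : Fin n, ∑ j : Fin n, ∑ k ∈ Finset.range n,
            ((-2 : RatFunc ℚ) ^ k * y ^ (k + 1)) * (((eMat n S ^ k) i j : ℤ) : RatFunc ℚ) := by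
          exact Finset.sum_congr rfl fun i _ => by
            rw [h1 i]
            exact Finset.sum_congr rfl fun j _ => h2 i j
      _ = ∑ i : Fin n, ∑ k ∈ Finset.range n, ∑ j : Fin n,
            ((-2 : RatFunc ℚ) ^ k * y ^ (k + 1)) * (((eMat n S ^ k) i j : ℤ) : RatFunc ℚ) :=
          Finset.sum_congr rfl fun i _ => Finset.sum_comm
      _ = ∑ k ∈ Finset.range n, ∑ i : Fin n, ∑ j : Fin n,
            ((-2 : RatFunc ℚ) ^ k * y ^ (k + 1)) * (((eMat n S ^ k) i j : ℤ) : RatFunc ℚ) :=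
          Finset.sum_comm
      _ = ∑ k ∈ Finset.range n, ((-2 : RatFunc ℚ) ^ k * y ^ (k + 1))
            * ((∑ i : Fin n, ∑ j : Fin n, (eMat n S ^ k) i j : ℤ) : RatFunc ℚ) := by
          refine Finset.sum_congr rfl (fun k _ => ?_)
          simp only [← Finset.mul_sum]
          congr 1
          push_cast
          rfl
  -- put it together
  apply hφinj
  have h0 : (mMat n S).charpoly = (charmatrix (mMat n S)).det := rfl
  rw [h0, RingHom.map_det, RingHom.mapMatrix_apply, hchar, hfact, Matrix.det_mul, hdetA,
    hdet1, hsumw]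
  rw [map_sub, map_pow, map_sum, ← hxdef]
  rw [mul_sub, mul_one, Finset.mul_sum]
  congr 1
  refine Finset.sum_congr rfl (fun k hk => ?_)
  rw [Finset.mem_range] at hk
  rw [_root_.map_mul, hCmap, map_pow, ← hxdef]
  have hpow : x ^ n * y ^ (k + 1) = x ^ (n - 1 - k) := by
    have h1 : x ^ n = x ^ (n - 1 - k) * x ^ (k + 1) := by
      rw [← pow_add]
      congr 1
      omega
    rw [h1, mul_assoc, ← mul_pow, hxy, one_pow, mul_one]
  rw [← hpow]
  push_cast
  ring


end Stmt17Aux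

/-- Theorem 1.3: For every `e` there exists `N` such that for all
`n > N` and every tuple `(a₂,…,a_e)` of integers with `2^{i-1} ∣ a_i`, there is an
`n×n` `{±1}`-matrix `M` with unit diagonal whose characteristic polynomial
coefficients satisfy `b_i ≡ a_i (mod 2^e)` for `i ∈ {2,…,e}` (where
`b_i = coeff (n - i)` of `det(xI - M)`). -/
theorem stmt17 (e : ℕ) :
    ∃ N : ℕ, ∀ n : ℕ, n > N → ∀ a : ℕ → ℤ,
      (∀ i, 2 ≤ i → i ≤ e → (2 : ℤ) ^ (i - 1) ∣ a i) →
      ∃ M : Matrix (Fin n) (Fin n) ℤ,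
        (∀ i j, M i j = 1 ∨ M i j = -1) ∧ (∀ i, M i i = 1) ∧
        ∀ i, 2 ≤ i → i ≤ e → M.charpoly.coeff (n - i) ≡ a i [ZMOD (2 ^ e : ℤ)] := by
  classical
  refine ⟨e * 2 ^ e * (e + 1) + e + 2, ?_⟩
  intro n hn a ha
  set r : ℕ → ℤ := fun j => (-1) ^ (j + 1) * (a (j + 1) / 2 ^ j) with hrdef
  obtain ⟨L, hL1, hLlen, hLcong⟩ := Stmt17Aux.exists_runs e (e - 1) (by omega) r
  set S := Stmt17Aux.runSet L with hSdef
  have hbound : ∀ p ∈ S, p + e < n := by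
    intro p hp
    have h1 : p < (L.map (· + 1)).sum := Stmt17Aux.runSet_lt L p hp
    have h2 : (L.map (· + 1)).sum ≤ L.length * (e + 1) := by
      have h2' := List.sum_le_card_nsmul (L.map (· + 1)) (e + 1) ?_
      · simpa [List.length_map, smul_eq_mul] using h2'
      · intro x hx
        obtain ⟨ℓ, hℓ, rfl⟩ := List.mem_map.mp hx
        have := hL1 ℓ hℓ
        omega
    have h3 : L.length ≤ e * 2 ^ e :=
      le_trans hLlen (Nat.mul_le_mul_right _ (by omega))
    have h4 : L.length * (e + 1) ≤ e * 2 ^ e * (e + 1) := Nat.mul_le_mul_right _ h3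
    omega
  refine ⟨Stmt17Aux.mMat n S, ?_, ?_, ?_⟩
  · intro i j
    by_cases hc : (j : ℕ) = (i : ℕ) + 1 ∧ (i : ℕ) ∈ S
    · right
      exact if_pos hc
    · left
      exact if_neg hc
  · intro i
    exact if_neg (by rintro ⟨h1, -⟩; omega)
  · intro i hi2 hie
    have hne : 1 ≤ n := by omega
    rw [Stmt17Aux.charpoly_mMat n S hne]
    set c : ℤ := ∑ i' : Fin n, ∑ j' : Fin n, (Stmt17Aux.eMat n S ^ (i - 1)) i' j' with hcdef
    have hin : i < n := by
      have : e ≤ e * 2 ^ e * (e + 1) + e := Nat.le_add_left _ _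
      omega
    have hcoeff : (Polynomial.X ^ n - ∑ k ∈ Finset.range n,
        Polynomial.C ((-2 : ℤ) ^ k * ∑ i' : Fin n, ∑ j' : Fin n, (Stmt17Aux.eMat n S ^ k) i' j')
          * Polynomial.X ^ (n - 1 - k)).coeff (n - i)
        = -((-2) ^ (i - 1) * c) := by
      rw [Polynomial.coeff_sub, Polynomial.coeff_X_pow, if_neg (by omega),
        Polynomial.finset_sum_coeff, Finset.sum_eq_single (i - 1)]
      · rw [Polynomial.coeff_C_mul, Polynomial.coeff_X_pow, if_pos (by omega), mul_one, hcdef]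
        ring
      · intro k hk hki
        rw [Finset.mem_range] at hk
        rw [Polynomial.coeff_C_mul, Polynomial.coeff_X_pow, if_neg (by omega), mul_zero]
      · intro h
        exact absurd (Finset.mem_range.mpr (by omega)) h
    rw [hcoeff]
    have hcw : c = (Stmt17Aux.winCard S (i - 1) : ℤ) := by
      rw [hcdef]
      exact Stmt17Aux.csum_eq n S (i - 1) (by omega)
        (fun p hp => by have := hbound p hp; omega)
    obtain ⟨a', ha'⟩ := ha i hi2 hie
    have hdiv : a i / 2 ^ (i - 1) = a' := by
      rw [ha']
      exact Int.mul_ediv_cancel_left _ (by positivity)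
    have hr : r (i - 1) = (-1) ^ i * a' := by
      rw [hrdef]
      have h5 : i - 1 + 1 = i := by omega
      simp only []
      rw [h5, hdiv]
    have hwin : ((Stmt17Aux.winCard S (i - 1) : ℕ) : ℤ)
        ≡ r (i - 1) [ZMOD (2 : ℤ) ^ (e - (i - 1))] := by
      rw [hSdef, Stmt17Aux.winCard_runSet L (i - 1) (by omega)]
      exact hLcong (i - 1) (by omega) (by omega)
    set k := i - 1 with hkdef
    have hmod : c ≡ (-1) ^ i * a' [ZMOD (2 : ℤ) ^ (e - k)] := by
      rw [hcw, ← hr]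
      exact hwin
    have h6 := hmod.mul_left' (c := (2 : ℤ) ^ k)
    have h7 : (2 : ℤ) ^ k * (2 : ℤ) ^ (e - k) = 2 ^ e := by
      rw [← pow_add]
      congr 1
      omega
    rw [h7] at h6
    have h8 := h6.mul_left ((-1 : ℤ) ^ i)
    have hsq : ((-1 : ℤ) ^ i) * ((-1 : ℤ) ^ i) = 1 := by
      rw [← pow_add, show i + i = 2 * i by ring, pow_mul]
      norm_num
    have h9 : (-1 : ℤ) ^ i * ((2 : ℤ) ^ k * ((-1) ^ i * a')) = a i := by
      linear_combination (2 : ℤ) ^ k * a' * hsq - ha'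
    rw [h9] at h8
    have h10 : -(((-2 : ℤ)) ^ k * c) = (-1) ^ i * ((2 : ℤ) ^ k * c) := by
      have hi : i = k + 1 := by omega
      rw [hi, neg_pow, pow_succ]
      ring
    rw [h10]
    exact h8
end
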